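/- arXiv:1308.3896 — 3 statements merged into one kernel-verified Lean document; each statement's English description precedes it below -/
import Mathlib

section
/- (Amalgamation Lemma, zero-sum free case.) Let G = ⊕_{i=1}^r ⊕_{j=1}^{k_i} C_{p_i^{α_{i,j}}} with distinct primes p_1, …, p_r and α_{i,1} ≥ α_{i,2} ≥ ··· ≥ α_{i,k_i} ≥ 1 for each i (setting α_{i,j} = 0 for j > k_i). Suppose α_{i,1} > α_{i,2} for some i ∈ [1, r], and let ℓ be a positive integer divisible by p_i^{α_{i,2}+1}. If S is a dense zero-sum free indexed sequence over G, then S contains at most p_i − 1 elements of order ℓ, i.e. |{(g,n) ∈ S : ord(g) = ℓ}| ≤ p_i − 1. -/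
open Finset

def IsIndexedSeq {G : Type*} [AddCommGroup G] (S : Finset (G × ℕ)) : Prop :=
  ∀ x ∈ S, x.1 ≠ 0

def seqSum {G : Type*} [AddCommGroup G] (S : Finset (G × ℕ)) : G :=
  ∑ x ∈ S, x.1

noncomputable def crossNum {G : Type*} [AddCommGroup G] (S : Finset (G × ℕ)) : ℝ :=
  ∑ x ∈ S, (1 : ℝ) / (addOrderOf x.1 : ℝ)

def ZeroSumFree {G : Type*} [AddCommGroup G] (S : Finset (G × ℕ)) : Prop :=
  ∀ T ⊆ S, T.Nonempty → seqSum T ≠ 0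

def IsIrreducibleSeq {G : Type*} [AddCommGroup G] (S : Finset (G × ℕ)) : Prop :=
  S.Nonempty ∧ seqSum S = 0 ∧ ∀ T ⊆ S, T.Nonempty → T ≠ S → seqSum T ≠ 0

def IsFactorization {G : Type*} [AddCommGroup G] (S : Finset (G × ℕ))
    (F : Finset (Finset (G × ℕ))) : Prop :=
  (∀ A ∈ F, IsIrreducibleSeq A) ∧
    (∀ A ∈ F, ∀ B ∈ F, A ≠ B → Disjoint A B) ∧
    (∀ x, x ∈ S ↔ ∃ A ∈ F, x ∈ A)

def IsUFIS {G : Type*} [AddCommGroup G] (S : Finset (G × ℕ)) : Prop :=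
  IsIndexedSeq S ∧ seqSum S = 0 ∧ ∃! F, IsFactorization S F

noncomputable def littleK (G : Type*) [AddCommGroup G] : ℝ :=
  sSup {x : ℝ | ∃ S : Finset (G × ℕ), IsIndexedSeq S ∧ ZeroSumFree S ∧ crossNum S = x}

noncomputable def bigK (G : Type*) [AddCommGroup G] : ℝ :=
  sSup {x : ℝ | ∃ S : Finset (G × ℕ), IsIndexedSeq S ∧ IsIrreducibleSeq S ∧ crossNum S = x}

noncomputable def K1 (G : Type*) [AddCommGroup G] : ℝ :=
  sSup {x : ℝ | ∃ S : Finset (G × ℕ), IsUFIS S ∧ crossNum S = x}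

def DenseZSF {G : Type*} [AddCommGroup G] (S : Finset (G × ℕ)) : Prop :=
  IsIndexedSeq S ∧ ZeroSumFree S ∧ crossNum S = littleK G ∧
    ∀ T : Finset (G × ℕ), IsIndexedSeq T → ZeroSumFree T → crossNum T = littleK G →
      S.card ≤ T.card

def DenseUFIS {G : Type*} [AddCommGroup G] (S : Finset (G × ℕ)) : Prop :=
  IsUFIS S ∧ crossNum S = K1 G ∧
    ∀ T : Finset (G × ℕ), IsUFIS T → crossNum T = K1 G → S.card ≤ T.card

def WidePrime (p n : ℕ) : Prop :=
  ¬ p ∣ n ∧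
    (p : ℝ) / ((p : ℝ) - 1) ≥
      ∏ q ∈ n.primeFactors,
        ((q : ℝ) ^ (n.factorization q + 1) - 1) /
          ((q : ℝ) ^ (n.factorization q + 1) - (q : ℝ) ^ (n.factorization q))

def Wide2Prime (p n : ℕ) : Prop :=
  ¬ p ∣ n ∧
    ((p : ℝ) ^ 2 + 2 * (p : ℝ) - 2) / (p : ℝ) ^ 2 ≥
      ∏ q ∈ n.primeFactors,
        ((q : ℝ) ^ (n.factorization q + 1) - 1) /
          ((q : ℝ) ^ (n.factorization q + 1) - (q : ℝ) ^ (n.factorization q))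

def IsWideNat (n : ℕ) : Prop :=
  0 < n ∧ ∀ q ∈ n.primeFactors,
    WidePrime q (∏ q' ∈ n.primeFactors.filter (fun q' => q < q'), q' ^ n.factorization q')

def Is2WideNat (n : ℕ) : Prop :=
  0 < n ∧ ∀ q ∈ n.primeFactors,
    Wide2Prime q (∏ q' ∈ n.primeFactors.filter (fun q' => q < q'), q' ^ n.factorization q')



-- enumeration helper
lemma exists_enum {β : Type*} (S : Finset β) (dflt : β) :
    ∃ f : ℕ → β, (∀ n, n < S.card → f n ∈ S) ∧
      (∀ m n, m < S.card → n < S.card → f m = f n → m = n) := by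
  refine ⟨fun n => S.toList.getD n dflt, ?_, ?_⟩
  · intro n hn
    have hlen : n < S.toList.length := by rw [Finset.length_toList]; exact hn
    show S.toList.getD n dflt ∈ S
    rw [List.getD_eq_getElem _ _ hlen]
    exact Finset.mem_toList.1 (List.getElem_mem hlen)
  · intro m n hm hn h
    have hm' : m < S.toList.length := by rw [Finset.length_toList]; exact hm
    have hn' : n < S.toList.length := by rw [Finset.length_toList]; exact hn
    simp only at h
    rw [List.getD_eq_getElem _ _ hm', List.getD_eq_getElem _ _ hn'] at h
    exact ((S.nodup_toList).getElem_inj_iff).1 h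

lemma zsf_card_lt {M : Type*} [AddCommGroup M] [Fintype M] {S : Finset (M × ℕ)}
    (hz : ZeroSumFree S) : S.card < Fintype.card M := by
  classical
  obtain ⟨f, hfmem, hfinj⟩ := exists_enum S (0, 0)
  set z : ℕ → M := fun n => ∑ m ∈ Finset.range n, (f m).1 with hzdef
  have key : ∀ s t : ℕ, s < t → t ≤ S.card → z s ≠ z t := by
    intro s t hst ht heq
    set T : Finset (M × ℕ) := (Finset.Ico s t).image f with hT
    have hTsub : T ⊆ S := by
      intro x hx
      obtain ⟨m, hm, rfl⟩ := Finset.mem_image.1 hx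
      exact hfmem m (lt_of_lt_of_le (Finset.mem_Ico.1 hm).2 ht)
    have hinjon : ∀ x ∈ Finset.Ico s t, ∀ y ∈ Finset.Ico s t, f x = f y → x = y := by
      intro a ha b hb h
      exact hfinj a b (lt_of_lt_of_le (Finset.mem_Ico.1 ha).2 ht)
        (lt_of_lt_of_le (Finset.mem_Ico.1 hb).2 ht) h
    have hsum : seqSum T = ∑ m ∈ Finset.Ico s t, (f m).1 := Finset.sum_image hinjon
    have hcons : z s + ∑ m ∈ Finset.Ico s t, (f m).1 = z t := by
      simp only [hzdef, Finset.range_eq_Ico]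
      exact Finset.sum_Ico_consecutive (fun m => (f m).1) (Nat.zero_le s) hst.le
    have hzero : seqSum T = 0 := by
      rw [hsum]
      rw [heq] at hcons
      exact (add_eq_left).1 hcons
    have hne : T.Nonempty := ⟨f s, Finset.mem_image.2 ⟨s, Finset.mem_Ico.2 ⟨le_refl s, hst⟩, rfl⟩⟩
    exact hz T hTsub hne hzero
  have hinj2 : Set.InjOn z ↑(Finset.range (S.card + 1)) := by
    intro a ha b hb h
    by_contra hne
    rcases Ne.lt_or_gt hne with hlt | hlt
    · exact key a b hlt (by simpa using Nat.lt_succ_iff.1 (Finset.mem_range.1 hb)) h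
    · exact key b a hlt (by simpa using Nat.lt_succ_iff.1 (Finset.mem_range.1 ha)) h.symm
  have := Finset.card_le_card_of_injOn z (fun _ _ => Finset.mem_univ _) hinj2
  simpa using this

lemma crossNum_le_card {M : Type*} [AddCommGroup M] [Fintype M] (S : Finset (M × ℕ)) :
    crossNum S ≤ S.card := by
  have h : crossNum S ≤ ∑ _x ∈ S, (1 : ℝ) := by
    apply Finset.sum_le_sum
    intro x _
    have h1 : 1 ≤ addOrderOf x.1 := addOrderOf_pos x.1
    apply div_le_one_of_le₀
    · exact_mod_cast h1
    · positivity
  simpa using h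

lemma littleK_bddAbove {M : Type*} [AddCommGroup M] [Fintype M] :
    BddAbove {x : ℝ | ∃ S : Finset (M × ℕ), IsIndexedSeq S ∧ ZeroSumFree S ∧ crossNum S = x} := by
  refine ⟨(Fintype.card M : ℝ), ?_⟩
  rintro x ⟨S, _, hzsf, rfl⟩
  calc crossNum S ≤ S.card := crossNum_le_card S
    _ ≤ (Fintype.card M : ℝ) := by exact_mod_cast (zsf_card_lt hzsf).le

section CS

variable {r : ℕ} {p k : Fin r → ℕ} {α : Fin r → ℕ → ℕ} {i₀ : Fin r}

def CSmem (p k : Fin r → ℕ) (α : Fin r → ℕ → ℕ) (i₀ : Fin r)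
    (y : (i : Fin r) → (j : Fin (k i)) → ZMod (p i ^ α i j.val)) : Prop :=
  (p i₀) • y = 0 ∧ ∀ (i : Fin r) (j : Fin (k i)), ((i ≠ i₀) ∨ ((j : ℕ) ≠ 0)) → y i j = 0

lemma CSmem_zero : CSmem p k α i₀ 0 := ⟨smul_zero _, fun _ _ _ => rfl⟩

lemma CSmem_add {y y' : (i : Fin r) → (j : Fin (k i)) → ZMod (p i ^ α i j.val)}
    (h : CSmem p k α i₀ y) (h' : CSmem p k α i₀ y') : CSmem p k α i₀ (y + y') := by
  refine ⟨by rw [smul_add, h.1, h'.1, add_zero], fun i j hij => ?_⟩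
  have h1 := h.2 i j hij
  have h2 := h'.2 i j hij
  simp [Pi.add_apply, h1, h2]

lemma CSmem_dvd (hp : (p i₀).Prime) (hki : 0 < k i₀) (hα : 1 ≤ α i₀ 0)
    {y : (i : Fin r) → (j : Fin (k i)) → ZMod (p i ^ α i j.val)}
    (hy : CSmem p k α i₀ y) :
    p i₀ ^ (α i₀ 0 - 1) ∣ (y i₀ ⟨0, hki⟩).val ∧
      (y i₀ ⟨0, hki⟩).val < p i₀ * p i₀ ^ (α i₀ 0 - 1) := by
  haveI : NeZero (p i₀ ^ α i₀ 0) := ⟨(pow_pos hp.pos _).ne'⟩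
  set x := y i₀ ⟨0, hki⟩ with hxdef
  have hx : (p i₀) • x = 0 := by
    have := congrFun (congrFun hy.1 i₀) ⟨0, hki⟩
    simpa using this
  have hxx : ((x.val : ℕ) : ZMod (p i₀ ^ α i₀ 0)) = x := ZMod.natCast_rightInverse x
  have hcast : ((p i₀ * x.val : ℕ) : ZMod (p i₀ ^ α i₀ 0)) = 0 := by
    push_cast
    rw [hxx, ← nsmul_eq_mul]
    exact hx
  have hdvd : p i₀ ^ α i₀ 0 ∣ p i₀ * x.val :=
    (ZMod.natCast_eq_zero_iff _ _).1 hcast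
  have hNsplit : p i₀ ^ α i₀ 0 = p i₀ * p i₀ ^ (α i₀ 0 - 1) := by
    conv_lhs => rw [← Nat.succ_pred_eq_of_pos hα]
    rw [pow_succ']
    rfl
  refine ⟨?_, by rw [← hNsplit]; exact ZMod.val_lt x⟩
  have hdvd2 : p i₀ * p i₀ ^ (α i₀ 0 - 1) ∣ p i₀ * x.val := by rw [← hNsplit]; exact hdvd
  exact (Nat.mul_dvd_mul_iff_left hp.pos).1 hdvd2

lemma CSmem_div_lt (hp : (p i₀).Prime) (hki : 0 < k i₀) (hα : 1 ≤ α i₀ 0)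
    {y : (i : Fin r) → (j : Fin (k i)) → ZMod (p i ^ α i j.val)}
    (hy : CSmem p k α i₀ y) :
    (y i₀ ⟨0, hki⟩).val / p i₀ ^ (α i₀ 0 - 1) < p i₀ := by
  obtain ⟨_, h2⟩ := CSmem_dvd hp hki hα hy
  have hM : 0 < p i₀ ^ (α i₀ 0 - 1) := pow_pos hp.pos _
  rw [Nat.div_lt_iff_lt_mul hM]
  exact h2

lemma CSmem_inj (hp : (p i₀).Prime) (hki : 0 < k i₀) (hα : 1 ≤ α i₀ 0)
    {y y' : (i : Fin r) → (j : Fin (k i)) → ZMod (p i ^ α i j.val)}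
    (hy : CSmem p k α i₀ y) (hy' : CSmem p k α i₀ y')
    (heq : (y i₀ ⟨0, hki⟩).val / p i₀ ^ (α i₀ 0 - 1)
        = (y' i₀ ⟨0, hki⟩).val / p i₀ ^ (α i₀ 0 - 1)) : y = y' := by
  haveI : NeZero (p i₀ ^ α i₀ 0) := ⟨(pow_pos hp.pos _).ne'⟩
  obtain ⟨h1, _⟩ := CSmem_dvd hp hki hα hy
  obtain ⟨h1', _⟩ := CSmem_dvd hp hki hα hy'
  have hval : (y i₀ ⟨0, hki⟩).val = (y' i₀ ⟨0, hki⟩).val := by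
    calc (y i₀ ⟨0, hki⟩).val
        = p i₀ ^ (α i₀ 0 - 1) * ((y i₀ ⟨0, hki⟩).val / p i₀ ^ (α i₀ 0 - 1)) :=
          (Nat.mul_div_cancel' h1).symm
      _ = p i₀ ^ (α i₀ 0 - 1) * ((y' i₀ ⟨0, hki⟩).val / p i₀ ^ (α i₀ 0 - 1)) := by rw [heq]
      _ = (y' i₀ ⟨0, hki⟩).val := Nat.mul_div_cancel' h1'
  have hx : y i₀ ⟨0, hki⟩ = y' i₀ ⟨0, hki⟩ := ZMod.val_injective _ hval
  funext i j
  by_cases hi : i = i₀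
  · subst hi
    by_cases hj : (j : ℕ) = 0
    · have hj0 : j = ⟨0, hki⟩ := Fin.ext hj
      rw [hj0]
      exact hx
    · rw [hy.2 i j (Or.inr hj), hy'.2 i j (Or.inr hj)]
  · rw [hy.2 i j (Or.inl hi), hy'.2 i j (Or.inl hi)]

lemma CSmem_smul (hp : ∀ i, (p i).Prime) (hpinj : Function.Injective p)
    (hmono : ∀ i, ∀ j j' : ℕ, j ≤ j' → j' < k i → α i j' ≤ α i j)
    {l d : ℕ} (hld : l = p i₀ * d) (hPa2d : p i₀ ^ (α i₀ 1) ∣ d)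
    {g : (i : Fin r) → (j : Fin (k i)) → ZMod (p i ^ α i j.val)} (hg : l • g = 0) :
    CSmem p k α i₀ (d • g) := by
  constructor
  · rw [smul_smul, ← hld, hg]
  · intro i j hij
    have hxl : l • (g i j) = 0 := by
      have := congrFun (congrFun hg i) j
      simpa using this
    have hord_l : addOrderOf (g i j) ∣ l := addOrderOf_dvd_of_nsmul_eq_zero hxl
    have hself : (p i ^ α i j.val) • (g i j) = 0 := by rw [nsmul_eq_mul]; simp
    have hord_p : addOrderOf (g i j) ∣ p i ^ α i j.val := addOrderOf_dvd_of_nsmul_eq_zero hself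
    have hdvd_d : addOrderOf (g i j) ∣ d := by
      by_cases hi : i = i₀
      · subst hi
        have hj : (j : ℕ) ≠ 0 := hij.resolve_left (by simp)
        have hj1 : 1 ≤ (j : ℕ) := Nat.one_le_iff_ne_zero.2 hj
        have hle : α i (j : ℕ) ≤ α i 1 := hmono i 1 j hj1 j.isLt
        exact (hord_p.trans (pow_dvd_pow _ hle)).trans hPa2d
      · have hcop0 : Nat.Coprime (p i) (p i₀) :=
          (Nat.coprime_primes (hp i) (hp i₀)).2 (fun h => hi (hpinj h))
        have hcop : Nat.Coprime (p i ^ α i j.val) (p i₀) := Nat.Coprime.pow_left _ hcop0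
        have hcop2 : Nat.Coprime (addOrderOf (g i j)) (p i₀) :=
          Nat.Coprime.coprime_dvd_left hord_p hcop
        exact hcop2.dvd_of_dvd_mul_left (hld ▸ hord_l)
    have happ : (d • g) i j = d • (g i j) := by simp
    rw [happ]
    exact addOrderOf_dvd_iff_nsmul_eq_zero.1 hdvd_d

end CS

theorem stmt5 (r : ℕ) (p k : Fin r → ℕ) (α : Fin r → ℕ → ℕ)
    (hp : ∀ i, (p i).Prime) (hinj : Function.Injective p)
    (hk : ∀ i, 1 ≤ k i)
    (hα1 : ∀ i j, j < k i → 1 ≤ α i j)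
    (hmono : ∀ i, ∀ j j' : ℕ, j ≤ j' → j' < k i → α i j' ≤ α i j)
    (hzero : ∀ i j, k i ≤ j → α i j = 0)
    (i₀ : Fin r) (hgt : α i₀ 1 < α i₀ 0)
    (l : ℕ) (hl : 0 < l) (hdvd : p i₀ ^ (α i₀ 1 + 1) ∣ l)
    (S : Finset (((i : Fin r) → (j : Fin (k i)) → ZMod (p i ^ α i j.val)) × ℕ))
    (hS : DenseZSF S) :
    (S.filter (fun x => addOrderOf x.1 = l)).card ≤ p i₀ - 1 := by
  classical
  haveI instZ : ∀ (i : Fin r) (j : Fin (k i)), Fintype (ZMod (p i ^ α i j.val)) := fun i j =>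
    @ZMod.fintype _ ⟨(pow_pos (hp i).pos _).ne'⟩
  haveI instG : Fintype ((i : Fin r) → (j : Fin (k i)) → ZMod (p i ^ α i j.val)) := Pi.instFintype
  by_contra hcon
  push_neg at hcon
  have hP2 : 2 ≤ p i₀ := (hp i₀).two_le
  have hPcard : p i₀ ≤ (S.filter (fun x => addOrderOf x.1 = l)).card := by omega
  obtain ⟨T₀, hT₀sub, hT₀card⟩ := Finset.exists_subset_card_eq hPcard
  have hT₀S : T₀ ⊆ S := hT₀sub.trans (Finset.filter_subset _ _)
  have hT₀ord : ∀ x ∈ T₀, addOrderOf x.1 = l := fun x hx => (Finset.mem_filter.1 (hT₀sub hx)).2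
  have hPl : p i₀ ∣ l := dvd_trans (dvd_pow_self (p i₀) (Nat.succ_ne_zero _)) hdvd
  have hld : l = p i₀ * (l / p i₀) := (Nat.mul_div_cancel' hPl).symm
  set d := l / p i₀ with hddef
  have hd0 : 0 < d := by
    rcases Nat.eq_zero_or_pos d with h | h
    · rw [h, mul_zero] at hld; omega
    · exact h
  have hdl : d < l := by
    rw [hld]
    exact (Nat.lt_mul_iff_one_lt_left hd0).2 (by omega)
  have hPa2d : p i₀ ^ (α i₀ 1) ∣ d := by
    have h1 : p i₀ * p i₀ ^ (α i₀ 1) ∣ p i₀ * d := by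
      rw [← pow_succ', ← hld]; exact hdvd
    exact (Nat.mul_dvd_mul_iff_left (show 0 < p i₀ by omega)).1 h1
  have hki : 0 < k i₀ := hk i₀
  have hα1' : 1 ≤ α i₀ 0 := hα1 i₀ 0 hki
  obtain ⟨f, hfmem, hfinj⟩ := exists_enum T₀ (0, 0)
  set z : ℕ → ((i : Fin r) → (j : Fin (k i)) → ZMod (p i ^ α i j.val)) :=
    fun n => ∑ m ∈ Finset.range n, d • (f m).1 with hzdef
  have hzC : ∀ n, n ≤ p i₀ → CSmem p k α i₀ (z n) := by
    intro n
    induction n with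
    | zero =>
      intro _
      simp only [hzdef, Finset.range_zero, Finset.sum_empty]
      exact CSmem_zero
    | succ m ih =>
      intro hm
      have hstep : z (m + 1) = z m + d • (f m).1 := by
        simp only [hzdef]
        exact Finset.sum_range_succ _ m
      rw [hstep]
      refine CSmem_add (ih (by omega)) ?_
      have hmem : f m ∈ T₀ := hfmem m (by rw [hT₀card]; omega)
      have hordm : addOrderOf (f m).1 = l := hT₀ord _ hmem
      have hlg : l • (f m).1 = 0 := by rw [← hordm]; exact addOrderOf_nsmul_eq_zero _
      exact CSmem_smul hp hinj hmono hld hPa2d hlg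
  have hmaps : ∀ n ∈ Finset.range (p i₀ + 1),
      ((z n) i₀ ⟨0, hki⟩).val / p i₀ ^ (α i₀ 0 - 1) ∈ Finset.range (p i₀) := by
    intro n hn
    exact Finset.mem_range.2
      (CSmem_div_lt (hp i₀) hki hα1' (hzC n (Nat.lt_succ_iff.1 (Finset.mem_range.1 hn))))
  obtain ⟨a, ha, b, hb, hab, habeq⟩ :=
    Finset.exists_ne_map_eq_of_card_lt_of_maps_to (by simp) hmaps
  have ha' : a ≤ p i₀ := Nat.lt_succ_iff.1 (Finset.mem_range.1 ha)
  have hb' : b ≤ p i₀ := Nat.lt_succ_iff.1 (Finset.mem_range.1 hb)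
  have hzab : z a = z b := CSmem_inj (hp i₀) hki hα1' (hzC a ha') (hzC b hb') habeq
  obtain ⟨s, t, hst, hts, hzst⟩ : ∃ s t : ℕ, s < t ∧ t ≤ p i₀ ∧ z s = z t := by
    rcases hab.lt_or_gt with h | h
    · exact ⟨a, b, h, hb', hzab⟩
    · exact ⟨b, a, h, ha', hzab.symm⟩
  have hcons : z s + ∑ m ∈ Finset.Ico s t, d • (f m).1 = z t := by
    simp only [hzdef, Finset.range_eq_Ico]
    exact Finset.sum_Ico_consecutive _ (Nat.zero_le s) hst.le
  have hIco0 : ∑ m ∈ Finset.Ico s t, d • (f m).1 = 0 := by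
    rw [hzst] at hcons
    exact add_eq_left.1 hcons
  have hblock : d • (∑ m ∈ Finset.Ico s t, (f m).1) = 0 := by
    rw [Finset.smul_sum]; exact hIco0
  set T := (Finset.Ico s t).image f with hTdef
  have hIcoP : ∀ m ∈ Finset.Ico s t, m < T₀.card := by
    intro m hm; rw [hT₀card]; exact lt_of_lt_of_le (Finset.mem_Ico.1 hm).2 hts
  have hinjon : ∀ x ∈ Finset.Ico s t, ∀ y ∈ Finset.Ico s t, f x = f y → x = y :=
    fun x hx y hy h => hfinj x y (hIcoP x hx) (hIcoP y hy) h
  have hTsub : T ⊆ T₀ := by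
    intro x hx
    obtain ⟨m, hm, rfl⟩ := Finset.mem_image.1 hx
    exact hfmem m (hIcoP m hm)
  have hTS : T ⊆ S := hTsub.trans hT₀S
  have hTcard : T.card = t - s := by
    rw [hTdef, Finset.card_image_of_injOn hinjon, Nat.card_Ico]
  have hseq : seqSum T = ∑ m ∈ Finset.Ico s t, (f m).1 := Finset.sum_image hinjon
  set σg := seqSum T with hσdef
  have hTne : T.Nonempty := Finset.card_pos.1 (show 0 < T.card by omega)
  have hσne : σg ≠ 0 := hS.2.1 T hTS hTne
  have hordσ : addOrderOf σg ∣ d := by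
    apply addOrderOf_dvd_of_nsmul_eq_zero
    rw [hseq]
    exact hblock
  have h2ts : 2 ≤ t - s := by
    by_contra h2
    have hts1 : t = s + 1 := by omega
    have hsing : σg = (f s).1 := by
      rw [hseq, hts1]
      simp
    have hordfs : addOrderOf (f s).1 = l := hT₀ord _ (hfmem s (by rw [hT₀card]; omega))
    have hldvd : l ∣ d := by
      rw [← hordfs, ← hsing]
      exact hordσ
    have := Nat.le_of_dvd hd0 hldvd
    omega
  set n₀ := S.sup Prod.snd + 1 with hn₀def
  have hn₀ : (σg, n₀) ∉ S := by
    intro h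
    have h2 := Finset.le_sup (f := Prod.snd) h
    simp only [hn₀def] at h2
    omega
  set S' := insert (σg, n₀) (S \ T) with hS'def
  have hnotmem : (σg, n₀) ∉ S \ T := fun h => hn₀ (Finset.mem_sdiff.1 h).1
  have hcardS' : S'.card = S.card - (t - s) + 1 := by
    rw [hS'def, Finset.card_insert_of_notMem hnotmem, Finset.card_sdiff_of_subset hTS, hTcard]
  have hTleS : t - s ≤ S.card := hTcard ▸ Finset.card_le_card hTS
  have hlt : S'.card < S.card := by omega
  have hI : IsIndexedSeq S' := by
    intro x hx
    rcases Finset.mem_insert.1 hx with h | h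
    · rw [h]; exact hσne
    · exact hS.1 x (Finset.mem_sdiff.1 h).1
  have hZ : ZeroSumFree S' := by
    intro U hU hUne hU0
    by_cases hmem : (σg, n₀) ∈ U
    · have hUe : U.erase (σg, n₀) ⊆ S \ T := by
        intro x hx
        have h1 := Finset.mem_erase.1 hx
        rcases Finset.mem_insert.1 (hU h1.2) with h | h
        · exact absurd h h1.1
        · exact h
      have hU'sub : (U.erase (σg, n₀)) ∪ T ⊆ S :=
        Finset.union_subset (hUe.trans Finset.sdiff_subset) hTS
      have hdisj : Disjoint (U.erase (σg, n₀)) T := by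
        rw [Finset.disjoint_left]
        intro x hx hxT
        exact (Finset.mem_sdiff.1 (hUe hx)).2 hxT
      have h1 : seqSum ((U.erase (σg, n₀)) ∪ T) = seqSum (U.erase (σg, n₀)) + σg :=
        Finset.sum_union hdisj
      have h4 : σg + seqSum (U.erase (σg, n₀)) = 0 := by
        rw [← hU0]
        exact Finset.add_sum_erase U Prod.fst hmem
      have h5 : seqSum (U.erase (σg, n₀)) = -σg := eq_neg_of_add_eq_zero_right h4
      have hsum0 : seqSum ((U.erase (σg, n₀)) ∪ T) = 0 := by
        rw [h1, h5]
        exact neg_add_cancel σg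
      exact hS.2.1 _ hU'sub ⟨hTne.choose, Finset.mem_union_right _ hTne.choose_spec⟩ hsum0
    · have hUS : U ⊆ S := by
        intro x hx
        rcases Finset.mem_insert.1 (hU hx) with h | h
        · exact absurd (h ▸ hx) hmem
        · exact (Finset.mem_sdiff.1 h).1
      exact hS.2.1 U hUS hUne hU0
  have hordpos : 0 < addOrderOf σg := addOrderOf_pos σg
  have hordle : addOrderOf σg ≤ d := Nat.le_of_dvd hd0 hordσ
  have hcT : crossNum T = ((t - s : ℕ) : ℝ) * ((1 : ℝ) / l) := by
    have hconst : ∀ x ∈ T, (1 : ℝ) / (addOrderOf x.1 : ℝ) = 1 / l := fun x hx => by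
      rw [hT₀ord x (hTsub hx)]
    calc crossNum T = ∑ _x ∈ T, (1 : ℝ) / l := Finset.sum_congr rfl hconst
      _ = T.card * ((1 : ℝ) / l) := by rw [Finset.sum_const, nsmul_eq_mul]
      _ = ((t - s : ℕ) : ℝ) * ((1 : ℝ) / l) := by rw [hTcard]
  have hordR : (0 : ℝ) < (addOrderOf σg : ℝ) := by exact_mod_cast hordpos
  have hl0R : (0 : ℝ) < (l : ℝ) := by exact_mod_cast hl
  have hkey : ((t - s : ℕ) : ℝ) * ((1 : ℝ) / l) ≤ 1 / (addOrderOf σg : ℝ) := by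
    rw [mul_one_div, div_le_div_iff₀ hl0R hordR]
    have h1 : ((t - s : ℕ) : ℝ) ≤ (p i₀ : ℝ) := by
      exact_mod_cast (show t - s ≤ p i₀ by omega)
    have h2 : ((addOrderOf σg : ℕ) : ℝ) ≤ (d : ℝ) := by exact_mod_cast hordle
    have h3 : (l : ℝ) = (p i₀ : ℝ) * (d : ℝ) := by exact_mod_cast hld
    have h4 : (0 : ℝ) ≤ ((t - s : ℕ) : ℝ) := Nat.cast_nonneg _
    have h5 : (0 : ℝ) ≤ (p i₀ : ℝ) := Nat.cast_nonneg _
    nlinarith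
  have hsd : crossNum (S \ T) + crossNum T = crossNum S := Finset.sum_sdiff hTS
  have hcS' : crossNum S' = 1 / (addOrderOf σg : ℝ) + crossNum (S \ T) := by
    show (∑ x ∈ insert (σg, n₀) (S \ T), (1 : ℝ) / (addOrderOf x.1 : ℝ)) = _
    rw [Finset.sum_insert hnotmem]
    rfl
  have hge : crossNum S ≤ crossNum S' := by
    rw [hcS']
    rw [hcT] at hsd
    linarith
  have hbdd := littleK_bddAbove
    (M := (i : Fin r) → (j : Fin (k i)) → ZMod (p i ^ α i j.val))
  have hmem' : crossNum S' ∈ {x : ℝ |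
      ∃ S'' : Finset ((((i : Fin r) → (j : Fin (k i)) → ZMod (p i ^ α i j.val))) × ℕ),
        IsIndexedSeq S'' ∧ ZeroSumFree S'' ∧ crossNum S'' = x} := ⟨S', hI, hZ, rfl⟩
  have hle' : crossNum S' ≤ littleK ((i : Fin r) → (j : Fin (k i)) → ZMod (p i ^ α i j.val)) :=
    le_csSup hbdd hmem'
  have hlk := hS.2.2.1
  have heqK : crossNum S' = littleK ((i : Fin r) → (j : Fin (k i)) → ZMod (p i ^ α i j.val)) :=
    le_antisymm hle' (by rw [← hlk]; linarith)
  have hfin := hS.2.2.2 S' hI hZ heqK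
  omega
end

section
/- (Amalgamation Lemma, UFIS case.) Let G = ⊕_{i=1}^r ⊕_{j=1}^{k_i} C_{p_i^{α_{i,j}}} with distinct primes p_1, …, p_r and α_{i,1} ≥ α_{i,2} ≥ ··· ≥ α_{i,k_i} ≥ 1 for each i (setting α_{i,j} = 0 for j > k_i). Suppose α_{i,1} > α_{i,2} for some i ∈ [1, r], and let ℓ be a positive integer divisible by p_i^{α_{i,2}+1}. If S is a dense UFIS over G, then S contains at most p_i elements of order ℓ, i.e. |{(g,n) ∈ S : ord(g) = ℓ}| ≤ p_i. -/
open Finset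

section Basic

variable {G : Type*} [AddCommGroup G] [DecidableEq G]

lemma seqSum_sdiff {S T : Finset (G × ℕ)} (h : T ⊆ S) :
    seqSum (S \ T) = seqSum S - seqSum T := by
  unfold seqSum
  rw [eq_sub_iff_add_eq, Finset.sum_sdiff h]

lemma exists_irreducible_subset {S : Finset (G × ℕ)} (hne : S.Nonempty)
    (hz : seqSum S = 0) : ∃ A ⊆ S, IsIrreducibleSeq A := by
  classical
  have hmem : S ∈ S.powerset.filter (fun T => T.Nonempty ∧ seqSum T = 0) := by
    simp [hne, hz]
  obtain ⟨A, hA, hmin⟩ := Finset.exists_min_image _ (fun T => T.card) ⟨S, hmem⟩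
  simp only [Finset.mem_filter, Finset.mem_powerset] at hA
  refine ⟨A, hA.1, hA.2.1, hA.2.2, ?_⟩
  intro T hTA hTne hTA'
  intro hTz
  have hT : T ∈ S.powerset.filter (fun T => T.Nonempty ∧ seqSum T = 0) := by
    simp [Finset.mem_filter, Finset.mem_powerset, hTA.trans hA.1, hTne, hTz]
  have := hmin T hT
  have hlt : T.card < A.card := Finset.card_lt_card (lt_of_le_of_ne hTA hTA')
  omega

lemma exists_factorization (S : Finset (G × ℕ)) (hz : seqSum S = 0) :
    ∃ F, IsFactorization S F := by
  classical
  induction S using Finset.strongInduction with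
  | _ S ih =>
    rcases S.eq_empty_or_nonempty with rfl | hne
    · exact ⟨∅, by simp [IsFactorization], by simp, by simp⟩
    · obtain ⟨A, hAS, hA⟩ := exists_irreducible_subset hne hz
      have hAne : A.Nonempty := hA.1
      have hlt : S \ A ⊂ S := by
        obtain ⟨a, ha⟩ := hAne
        refine Finset.ssubset_iff_of_subset (Finset.sdiff_subset) |>.mpr
          ⟨a, hAS ha, by simp [ha]⟩
      have hz' : seqSum (S \ A) = 0 := by
        rw [seqSum_sdiff hAS, hz, hA.2.1, sub_zero]
      obtain ⟨F', hF'⟩ := ih _ hlt hz'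
      refine ⟨insert A F', ?_, ?_, ?_⟩
      · intro B hB
        rcases Finset.mem_insert.mp hB with rfl | hB
        · exact hA
        · exact hF'.1 B hB
      · intro B hB C hC hBC
        have key : ∀ D ∈ F', Disjoint A D := by
          intro D hD
          have hD' : D ⊆ S \ A := fun x hx => (hF'.2.2 x).mpr ⟨D, hD, hx⟩
          exact Finset.disjoint_left.mpr fun x hxA hxD =>
            (Finset.mem_sdiff.mp (hD' hxD)).2 hxA
        rcases Finset.mem_insert.mp hB with hB1 | hB1
        · rcases Finset.mem_insert.mp hC with hC1 | hC1
          · exact absurd (hB1.trans hC1.symm) hBC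
          · exact hB1 ▸ key C hC1
        · rcases Finset.mem_insert.mp hC with hC1 | hC1
          · exact hC1 ▸ (key B hB1).symm
          · exact hF'.2.1 B hB1 C hC1 hBC
      · intro x
        constructor
        · intro hx
          by_cases hxA : x ∈ A
          · exact ⟨A, Finset.mem_insert_self _ _, hxA⟩
          · obtain ⟨B, hB, hxB⟩ := (hF'.2.2 x).mp (Finset.mem_sdiff.mpr ⟨hx, hxA⟩)
            exact ⟨B, Finset.mem_insert_of_mem hB, hxB⟩
        · rintro ⟨B, hB, hxB⟩
          rcases Finset.mem_insert.mp hB with rfl | hB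
          · exact hAS hxB
          · exact Finset.sdiff_subset ((hF'.2.2 x).mpr ⟨B, hB, hxB⟩)

end Basic
section Sat
set_option linter.unusedSectionVars false

variable {G : Type*} [AddCommGroup G] [DecidableEq G]
variable {S : Finset (G × ℕ)} {F : Finset (Finset (G × ℕ))}

lemma parts_subset (hF : IsFactorization S F) {A : Finset (G × ℕ)} (hA : A ∈ F) : A ⊆ S :=
  fun x hx => (hF.2.2 x).mpr ⟨A, hA, hx⟩

lemma part_unique (hF : IsFactorization S F) {A B : Finset (G × ℕ)} (hA : A ∈ F)
    (hB : B ∈ F) {x : G × ℕ} (hxA : x ∈ A) (hxB : x ∈ B) : A = B := by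
  by_contra hne
  exact Finset.disjoint_left.mp (hF.2.1 A hA B hB hne) hxA hxB

lemma saturation (hz : seqSum S = 0) (hF : IsFactorization S F)
    (huniq : ∀ F', IsFactorization S F' → F' = F)
    {C : Finset (G × ℕ)} (hCS : C ⊆ S) (hCz : seqSum C = 0)
    {A : Finset (G × ℕ)} (hA : A ∈ F) (hmeets : (A ∩ C).Nonempty) : A ⊆ C := by
  classical
  obtain ⟨F₁, hF₁⟩ := exists_factorization C hCz
  have hz' : seqSum (S \ C) = 0 := by rw [seqSum_sdiff hCS, hz, hCz, sub_zero]
  obtain ⟨F₂, hF₂⟩ := exists_factorization (S \ C) hz'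
  have hsub1 : ∀ B ∈ F₁, B ⊆ C := fun B hB => parts_subset hF₁ hB
  have hsub2 : ∀ B ∈ F₂, B ⊆ S \ C := fun B hB => parts_subset hF₂ hB
  have hdisj12 : ∀ B₁ ∈ F₁, ∀ B₂ ∈ F₂, Disjoint B₁ B₂ := by
    intro B₁ h1 B₂ h2
    exact Finset.disjoint_left.mpr fun x hx1 hx2 =>
      (Finset.mem_sdiff.mp (hsub2 B₂ h2 hx2)).2 (hsub1 B₁ h1 hx1)
  have hfact : IsFactorization S (F₁ ∪ F₂) := by
    refine ⟨?_, ?_, ?_⟩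
    · intro B hB
      rcases Finset.mem_union.mp hB with h | h
      exacts [hF₁.1 B h, hF₂.1 B h]
    · intro B hB B' hB' hne
      rcases Finset.mem_union.mp hB with h | h <;> rcases Finset.mem_union.mp hB' with h' | h'
      · exact hF₁.2.1 B h B' h' hne
      · exact hdisj12 B h B' h'
      · exact (hdisj12 B' h' B h).symm
      · exact hF₂.2.1 B h B' h' hne
    · intro x
      constructor
      · intro hx
        by_cases hxC : x ∈ C
        · obtain ⟨B, hB, hxB⟩ := (hF₁.2.2 x).mp hxC
          exact ⟨B, Finset.mem_union_left _ hB, hxB⟩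
        · obtain ⟨B, hB, hxB⟩ := (hF₂.2.2 x).mp (Finset.mem_sdiff.mpr ⟨hx, hxC⟩)
          exact ⟨B, Finset.mem_union_right _ hB, hxB⟩
      · rintro ⟨B, hB, hxB⟩
        rcases Finset.mem_union.mp hB with h | h
        · exact hCS (hsub1 B h hxB)
        · exact Finset.sdiff_subset (hsub2 B h hxB)
  have heq := huniq _ hfact
  have hA' : A ∈ F₁ ∪ F₂ := heq ▸ hA
  rcases Finset.mem_union.mp hA' with h | h
  · exact hsub1 A h
  · obtain ⟨x, hx⟩ := hmeets
    rw [Finset.mem_inter] at hx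
    exact ((Finset.mem_sdiff.mp (hsub2 A h hx.1)).2 hx.2).elim

lemma irreducible_mem (hz : seqSum S = 0) (hF : IsFactorization S F)
    (huniq : ∀ F', IsFactorization S F' → F' = F)
    {B : Finset (G × ℕ)} (hBS : B ⊆ S) (hB : IsIrreducibleSeq B) : B ∈ F := by
  obtain ⟨x, hx⟩ := hB.1
  obtain ⟨A, hA, hxA⟩ := (hF.2.2 x).mp (hBS hx)
  have hAB : A ⊆ B :=
    saturation hz hF huniq hBS hB.2.1 hA ⟨x, Finset.mem_inter.mpr ⟨hxA, hx⟩⟩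
  have : A = B := by
    by_contra hne
    exact hB.2.2 A hAB (hF.1 A hA).1 hne (hF.1 A hA).2.1
  exact this ▸ hA

end Sat
section Amalg
set_option linter.unusedSectionVars false
set_option maxHeartbeats 1000000

variable {G : Type*} [AddCommGroup G] [DecidableEq G]

lemma amalgamate {S T : Finset (G × ℕ)} (hU : IsUFIS S) (hTS : T ⊆ S) (hTne : T.Nonempty)
    {h : G} (hh : h = seqSum T) (hh0 : h ≠ 0) {n₀ : ℕ} (hn : (h, n₀) ∉ S) :
    IsUFIS (insert (h, n₀) (S \ T)) := by
  classical
  obtain ⟨hind, hSz, F, hF, hu⟩ := hU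
  have huniq : ∀ F', IsFactorization S F' → F' = F := fun F' h' => hu F' h'
  set e : G × ℕ := (h, n₀) with he
  set 𝒜 : Finset (Finset (G × ℕ)) := F.filter (fun A => (A ∩ T).Nonempty) with h𝒜
  set U : Finset (G × ℕ) := 𝒜.biUnion id with hUdef
  set Bs : Finset (G × ℕ) := insert e (U \ T) with hBs
  set S' : Finset (G × ℕ) := insert e (S \ T) with hS'
  have hUS : U ⊆ S := by
    intro x hx
    obtain ⟨A, hA, hxA⟩ := Finset.mem_biUnion.mp hx
    exact parts_subset hF (Finset.mem_filter.mp hA).1 hxA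
  have hTU : T ⊆ U := by
    intro x hx
    obtain ⟨A, hA, hxA⟩ := (hF.2.2 x).mp (hTS hx)
    exact Finset.mem_biUnion.mpr
      ⟨A, Finset.mem_filter.mpr ⟨hA, ⟨x, Finset.mem_inter.mpr ⟨hxA, hx⟩⟩⟩, hxA⟩
  have hclass : ∀ x ∈ U, ∀ A ∈ F, x ∈ A → A ∈ 𝒜 := by
    intro x hx A hA hxA
    obtain ⟨A', hA', hxA'⟩ := Finset.mem_biUnion.mp hx
    have := part_unique hF hA (Finset.mem_filter.mp hA').1 hxA hxA'
    exact this ▸ hA'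
  have heU : e ∉ U \ T := fun hx => hn (hUS (Finset.mem_sdiff.mp hx).1)
  have heS : e ∉ S \ T := fun hx => hn (Finset.mem_sdiff.mp hx).1
  have heF : ∀ A ∈ F, e ∉ A := fun A hA hx => hn (parts_subset hF hA hx)
  have hUz : seqSum U = 0 := by
    rw [hUdef]
    unfold seqSum
    rw [Finset.sum_biUnion]
    · exact Finset.sum_eq_zero fun A hA => (hF.1 A (Finset.mem_filter.mp hA).1).2.1
    · intro A hA B hB hAB
      exact hF.2.1 A (Finset.mem_filter.mp (by exact_mod_cast hA)).1 B
        (Finset.mem_filter.mp (by exact_mod_cast hB)).1 (by simpa using hAB)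
  have hUT : seqSum (U \ T) = -h := by
    rw [seqSum_sdiff hTU, hUz, hh, zero_sub]
  have hBz : seqSum Bs = 0 := by
    rw [hBs]
    unfold seqSum at hUT ⊢
    rw [Finset.sum_insert heU, hUT]
    simp [he]
  -- the key saturation consequence
  have hsatU : ∀ C ⊆ S, seqSum C = 0 → T ⊆ C → U ⊆ C := by
    intro C hCS hCz hTC x hx
    obtain ⟨A, hA, hxA⟩ := Finset.mem_biUnion.mp hx
    obtain ⟨hAF, hAT⟩ := Finset.mem_filter.mp hA
    obtain ⟨t, ht⟩ := hAT
    rw [Finset.mem_inter] at ht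
    have : A ⊆ C := saturation hSz hF huniq hCS hCz hAF
      ⟨t, Finset.mem_inter.mpr ⟨ht.1, hTC ht.2⟩⟩
    exact this hxA
  -- no zero-sum subset of U \ T
  have hnozs : ∀ V ⊆ U \ T, V.Nonempty → seqSum V ≠ 0 := by
    intro V hVsub hVne hVz
    obtain ⟨x, hx⟩ := hVne
    have hxS : x ∈ S := hUS (Finset.mem_sdiff.mp (hVsub hx)).1
    obtain ⟨A, hA, hxA⟩ := (hF.2.2 x).mp hxS
    have hAV : A ⊆ V := saturation hSz hF huniq
      (fun y hy => hUS (Finset.mem_sdiff.mp (hVsub hy)).1) hVz hA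
      ⟨x, Finset.mem_inter.mpr ⟨hxA, hx⟩⟩
    have hA𝒜 : A ∈ 𝒜 := hclass x (Finset.mem_sdiff.mp (hVsub hx)).1 A hA hxA
    obtain ⟨t, ht⟩ := (Finset.mem_filter.mp hA𝒜).2
    rw [Finset.mem_inter] at ht
    exact (Finset.mem_sdiff.mp (hVsub (hAV ht.1))).2 ht.2
  -- any zero-sum set containing e inside Bs-shape pulls in all of Bs
  have hpull : ∀ V, e ∈ V → V.erase e ⊆ S \ T → seqSum V = 0 → Bs ⊆ V := by
    intro V heV hVe hVz
    have hdisj : Disjoint (V.erase e) T :=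
      Finset.disjoint_left.mpr fun x hx hxT => (Finset.mem_sdiff.mp (hVe hx)).2 hxT
    have hCS : (V.erase e) ∪ T ⊆ S := by
      intro x hx
      rcases Finset.mem_union.mp hx with h1 | h1
      · exact (Finset.mem_sdiff.mp (hVe h1)).1
      · exact hTS h1
    have hVsum : ∑ x ∈ V.erase e, x.1 = -h := by
      have h1 : ∑ x ∈ V.erase e, x.1 + h = 0 := by
        have := Finset.sum_erase_add V (fun x => x.1) heV
        rw [← hVz]
        unfold seqSum
        simpa [he] using this
      exact eq_neg_of_add_eq_zero_left h1
    have hCz : seqSum ((V.erase e) ∪ T) = 0 := by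
      unfold seqSum
      rw [Finset.sum_union hdisj, hVsum]
      have : ∑ x ∈ T, x.1 = h := hh.symm
      rw [this, neg_add_cancel]
    have hUC : U ⊆ (V.erase e) ∪ T := hsatU _ hCS hCz Finset.subset_union_right
    intro x hx
    rcases Finset.mem_insert.mp hx with rfl | hx1
    · exact heV
    · have hxU : x ∈ U := (Finset.mem_sdiff.mp hx1).1
      have hxT : x ∉ T := (Finset.mem_sdiff.mp hx1).2
      rcases Finset.mem_union.mp (hUC hxU) with h1 | h1
      · exact Finset.erase_subset _ _ h1
      · exact absurd h1 hxT
  have hBirr : IsIrreducibleSeq Bs := by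
    refine ⟨⟨e, Finset.mem_insert_self _ _⟩, hBz, ?_⟩
    intro V hVB hVne hVBne hVz
    by_cases heV : e ∈ V
    · have hVe : V.erase e ⊆ S \ T := by
        intro x hx
        have h2 := hVB (Finset.erase_subset _ _ hx)
        rcases Finset.mem_insert.mp h2 with h1 | h1
        · exact absurd h1 (Finset.ne_of_mem_erase hx)
        · exact Finset.mem_sdiff.mpr ⟨hUS (Finset.mem_sdiff.mp h1).1, (Finset.mem_sdiff.mp h1).2⟩
      exact hVBne (Finset.Subset.antisymm hVB (hpull V heV hVe hVz))
    · have hVsub : V ⊆ U \ T := by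
        intro x hx
        rcases Finset.mem_insert.mp (hVB hx) with h1 | h1
        · exact absurd (h1 ▸ hx) heV
        · exact h1
      exact hnozs V hVsub hVne hVz
  -- the new factorization
  set F' : Finset (Finset (G × ℕ)) := insert Bs (F \ 𝒜) with hF'def
  have hBsnotF : Bs ∉ F := fun hBF => heF Bs hBF (Finset.mem_insert_self _ _)
  have hpartsF' : ∀ A ∈ F \ 𝒜, A ⊆ S \ T := by
    intro A hA
    obtain ⟨hAF, hA𝒜⟩ := Finset.mem_sdiff.mp hA
    intro x hx
    refine Finset.mem_sdiff.mpr ⟨parts_subset hF hAF hx, fun hxT => ?_⟩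
    exact hA𝒜 (Finset.mem_filter.mpr ⟨hAF, ⟨x, Finset.mem_inter.mpr ⟨hx, hxT⟩⟩⟩)
  have hdisjB : ∀ A ∈ F \ 𝒜, Disjoint Bs A := by
    intro A hA
    obtain ⟨hAF, hA𝒜⟩ := Finset.mem_sdiff.mp hA
    refine Finset.disjoint_left.mpr fun x hxB hxA => ?_
    rcases Finset.mem_insert.mp hxB with rfl | h1
    · exact heF A hAF hxA
    · exact hA𝒜 (hclass x (Finset.mem_sdiff.mp h1).1 A hAF hxA)
  have hfact' : IsFactorization S' F' := by
    refine ⟨?_, ?_, ?_⟩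
    · intro A hA
      rcases Finset.mem_insert.mp hA with rfl | h1
      · exact hBirr
      · exact hF.1 A (Finset.mem_sdiff.mp h1).1
    · intro A hA B hB hAB
      rcases Finset.mem_insert.mp hA with rfl | h1
      · rcases Finset.mem_insert.mp hB with rfl | h2
        · exact absurd rfl hAB
        · exact hdisjB B h2
      · rcases Finset.mem_insert.mp hB with rfl | h2
        · exact (hdisjB A h1).symm
        · exact hF.2.1 A (Finset.mem_sdiff.mp h1).1 B (Finset.mem_sdiff.mp h2).1 hAB
    · intro x
      constructor
      · intro hx
        rcases Finset.mem_insert.mp hx with rfl | h1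
        · exact ⟨Bs, Finset.mem_insert_self _ _, Finset.mem_insert_self _ _⟩
        · obtain ⟨hxS, hxT⟩ := Finset.mem_sdiff.mp h1
          obtain ⟨A, hA, hxA⟩ := (hF.2.2 x).mp hxS
          by_cases hA𝒜 : A ∈ 𝒜
          · refine ⟨Bs, Finset.mem_insert_self _ _, ?_⟩
            exact Finset.mem_insert_of_mem (Finset.mem_sdiff.mpr
              ⟨Finset.mem_biUnion.mpr ⟨A, hA𝒜, hxA⟩, hxT⟩)
          · exact ⟨A, Finset.mem_insert_of_mem (Finset.mem_sdiff.mpr ⟨hA, hA𝒜⟩), hxA⟩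
      · rintro ⟨A, hA, hxA⟩
        rcases Finset.mem_insert.mp hA with rfl | h1
        · rcases Finset.mem_insert.mp hxA with rfl | h2
          · exact Finset.mem_insert_self _ _
          · exact Finset.mem_insert_of_mem (Finset.mem_sdiff.mpr
              ⟨hUS (Finset.mem_sdiff.mp h2).1, (Finset.mem_sdiff.mp h2).2⟩)
        · exact Finset.mem_insert_of_mem (hpartsF' A h1 hxA)
  -- uniqueness
  refine ⟨?_, ?_, F', hfact', ?_⟩
  · intro x hx
    rcases Finset.mem_insert.mp hx with rfl | h1
    · exact hh0
    · exact hind x (Finset.mem_sdiff.mp h1).1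
  · unfold seqSum
    rw [Finset.sum_insert heS]
    have : ∑ x ∈ S \ T, x.1 = -h := by
      have := seqSum_sdiff hTS
      unfold seqSum at this
      rw [this]
      unfold seqSum at hSz hh
      rw [hSz, ← hh, zero_sub]
    rw [this]
    simp [he]
  · intro F'' hfact''
    -- every part of F'' not containing e is in F \ 𝒜
    have hSsub : ∀ A ∈ F'', A ⊆ S' := fun A hA => parts_subset hfact'' hA
    have hnotE : ∀ A ∈ F'', e ∉ A → A ∈ F \ 𝒜 := by
      intro A hA heA
      have hAS : A ⊆ S \ T := by
        intro x hx
        rcases Finset.mem_insert.mp (hSsub A hA hx) with h1 | h1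
        · exact absurd (h1 ▸ hx) heA
        · exact h1
      have hAF : A ∈ F := irreducible_mem hSz hF huniq
        (fun x hx => (Finset.mem_sdiff.mp (hAS hx)).1) (hfact''.1 A hA)
      refine Finset.mem_sdiff.mpr ⟨hAF, fun hA𝒜 => ?_⟩
      obtain ⟨t, ht⟩ := (Finset.mem_filter.mp hA𝒜).2
      rw [Finset.mem_inter] at ht
      exact (Finset.mem_sdiff.mp (hAS ht.1)).2 ht.2
    have hE : ∀ A ∈ F'', e ∈ A → A = Bs := by
      intro A hA heA
      have hAe : A.erase e ⊆ S \ T := by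
        intro x hx
        rcases Finset.mem_insert.mp (hSsub A hA (Finset.erase_subset _ _ hx)) with h1 | h1
        · exact absurd h1 (Finset.ne_of_mem_erase hx)
        · exact h1
      have hBsA : Bs ⊆ A := hpull A heA hAe (hfact''.1 A hA).2.1
      by_contra hne
      exact (hfact''.1 A hA).2.2 Bs hBsA hBirr.1 (Ne.symm hne) hBz
    apply Finset.ext
    intro A
    constructor
    · intro hA
      by_cases heA : e ∈ A
      · exact (hE A hA heA) ▸ Finset.mem_insert_self _ _
      · exact Finset.mem_insert_of_mem (hnotE A hA heA)
    · intro hA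
      rcases Finset.mem_insert.mp hA with rfl | h1
      · obtain ⟨P, hP, heP⟩ := (hfact''.2.2 e).mp (Finset.mem_insert_self _ _)
        exact (hE P hP heP) ▸ hP
      · -- A ∈ F \ 𝒜 : find it in F''
        obtain ⟨x, hxA⟩ := (hF.1 A (Finset.mem_sdiff.mp h1).1).1
        have hxS' : x ∈ S' := Finset.mem_insert_of_mem (hpartsF' A h1 hxA)
        obtain ⟨Q, hQ, hxQ⟩ := (hfact''.2.2 x).mp hxS'
        by_cases heQ : e ∈ Q
        · have := hE Q hQ heQ
          subst this
          rcases Finset.mem_insert.mp hxQ with rfl | h2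
          · exact absurd hxA (heF A (Finset.mem_sdiff.mp h1).1)
          · have hA𝒜 : A ∈ 𝒜 := hclass x (Finset.mem_sdiff.mp h2).1 A
              (Finset.mem_sdiff.mp h1).1 hxA
            exact absurd hA𝒜 (Finset.mem_sdiff.mp h1).2
        · have hQF : Q ∈ F \ 𝒜 := hnotE Q hQ heQ
          have : Q = A := part_unique hF (Finset.mem_sdiff.mp hQF).1
            (Finset.mem_sdiff.mp h1).1 hxQ hxA
          exact this ▸ hQ

end Amalg
section Olson
set_option maxHeartbeats 1000000

lemma ptorsion_mem {p e : ℕ} (hp : p.Prime) (he : 1 ≤ e) {x : ZMod (p^e)} (hx : p • x = 0) :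
    ∃ c < p, x = (c : ZMod (p^e)) * (p : ZMod (p^e))^(e-1) := by
  haveI : NeZero (p^e) := ⟨pow_ne_zero e hp.pos.ne'⟩
  have hcast : ((p * x.val : ℕ) : ZMod (p^e)) = 0 := by
    push_cast
    rw [ZMod.natCast_val, ZMod.cast_id]
    rw [← nsmul_eq_mul]
    exact hx
  have hdvd : p^e ∣ p * x.val := (ZMod.natCast_eq_zero_iff _ _).mp hcast
  have hdvd' : p^(e-1) ∣ x.val := by
    have h1 : p * p^(e-1) ∣ p * x.val := by
      rw [← pow_succ']
      have : e - 1 + 1 = e := by omega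
      rw [this]
      exact hdvd
    exact (mul_dvd_mul_iff_left hp.pos.ne').mp h1
  refine ⟨x.val / p^(e-1), ?_, ?_⟩
  · have hlt : x.val < p^e := ZMod.val_lt x
    have h2 : p^e = p * p^(e-1) := by
      rw [← pow_succ']
      congr 1
      omega
    rw [Nat.div_lt_iff_lt_mul (pow_pos hp.pos _)]
    exact lt_of_lt_of_eq hlt h2
  · have hxv : x = ((x.val : ℕ) : ZMod (p^e)) := by rw [ZMod.natCast_val, ZMod.cast_id]
    conv_lhs => rw [hxv, ← Nat.div_mul_cancel hdvd']
    push_cast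
    ring

lemma torsion_smul {p e : ℕ} (hp : p.Prime) (he : 1 ≤ e) {y z : ZMod (p^e)}
    (hy : p • y = 0) (hy0 : y ≠ 0) (hz : p • z = 0) : ∃ c : ℕ, c • y = z := by
  haveI : NeZero (p^e) := ⟨pow_ne_zero e hp.pos.ne'⟩
  haveI : Fact p.Prime := ⟨hp⟩
  obtain ⟨u, hu, hyu⟩ := ptorsion_mem hp he hy
  obtain ⟨m, hm, hzm⟩ := ptorsion_mem hp he hz
  set q : ZMod (p^e) := (p : ZMod (p^e))^(e-1) with hq
  have hpq : (p : ZMod (p^e)) * q = 0 := by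
    rw [hq, ← pow_succ']
    have : e - 1 + 1 = e := by omega
    rw [this, ← Nat.cast_pow, ZMod.natCast_self]
  have hmodq : ∀ A : ℕ, ((A : ZMod (p^e)) * q = ((A % p : ℕ) : ZMod (p^e)) * q) := by
    intro A
    conv_lhs => rw [← Nat.div_add_mod A p]
    push_cast
    rw [add_mul, mul_comm ((p:ZMod (p^e))) ((A/p : ℕ) : ZMod (p^e)), mul_assoc, hpq,
      mul_zero, zero_add]
  have hu0 : (u : ZMod p) ≠ 0 := by
    intro h0
    apply hy0
    have hpu : p ∣ u := (ZMod.natCast_eq_zero_iff _ _).mp h0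
    have : u = 0 := Nat.eq_zero_of_dvd_of_lt hpu hu
    rw [hyu, this]
    simp
  set c : ℕ := ((m : ZMod p) * (u : ZMod p)⁻¹).val with hc
  refine ⟨c, ?_⟩
  have hcu : ((c * u : ℕ) : ZMod p) = ((m : ℕ) : ZMod p) := by
    push_cast
    rw [hc, ZMod.natCast_val, ZMod.cast_id]
    field_simp
  have hmod : (c * u) % p = m % p := by
    have := (ZMod.natCast_eq_natCast_iff _ _ _).mp hcu
    exact this
  rw [nsmul_eq_mul, hyu, hzm, ← mul_assoc, ← Nat.cast_mul, hmodq (c*u), hmodq m, hmod]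

lemma olson {ι : Type*} [DecidableEq ι] {p e : ℕ} (hp : p.Prime) (he : 1 ≤ e)
    (y : ι → ZMod (p^e)) (V : Finset ι) (hy : ∀ v ∈ V, y v ≠ 0 ∧ p • y v = 0)
    (z : ZMod (p^e)) (hz : p • z = 0) (hcard : p - 1 ≤ V.card) :
    ∃ B, B ⊆ V ∧ B.card ≤ p - 1 ∧ ∑ v ∈ B, y v = z := by
  classical
  have main : ∀ (W : Finset ι), (∀ v ∈ W, y v ≠ 0 ∧ p • y v = 0) →
      (∃ B ⊆ W, ∑ v ∈ B, y v = z) ∨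
        W.card + 1 ≤ (W.powerset.image fun B => ∑ v ∈ B, y v).card := by
    intro W
    induction W using Finset.induction_on with
    | empty =>
      intro _
      right
      simp
    | @insert a V₀ ha ih =>
      intro hyW
      have hy₀ : ∀ v ∈ V₀, y v ≠ 0 ∧ p • y v = 0 :=
        fun v hv => hyW v (Finset.mem_insert_of_mem hv)
      have hya := hyW a (Finset.mem_insert_self _ _)
      rcases ih hy₀ with ⟨B, hB, hsum⟩ | hc
      · exact Or.inl ⟨B, hB.trans (Finset.subset_insert _ _), hsum⟩
      set Ws : Finset (ZMod (p^e)) := V₀.powerset.image (fun B => ∑ v ∈ B, y v) with hWs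
      have hsums : (insert a V₀).powerset.image (fun B => ∑ v ∈ B, y v) =
          Ws ∪ Ws.image (fun s => y a + s) := by
        rw [hWs, Finset.powerset_insert, Finset.image_union, Finset.image_image,
          Finset.image_image]
        congr 1
        apply Finset.image_congr
        intro B hB
        simp only [Function.comp_apply]
        rw [Finset.sum_insert (fun haB => ha (Finset.mem_powerset.mp hB haB))]
      by_cases hsub : Ws.image (fun s => y a + s) ⊆ Ws
      · -- closed under adding y a: get z as multiple
        have hstep : ∀ s ∈ Ws, y a + s ∈ Ws := fun s hs =>
          hsub (Finset.mem_image_of_mem _ hs)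
        have h0 : (0 : ZMod (p^e)) ∈ Ws := by
          apply Finset.mem_image.mpr
          exact ⟨∅, Finset.mem_powerset.mpr (Finset.empty_subset _), by simp⟩
        have hcy : ∀ c : ℕ, c • y a ∈ Ws := by
          intro c
          induction c with
          | zero => simpa using h0
          | succ n ihn =>
            have h3 := hstep _ ihn
            rw [succ_nsmul']
            exact h3
        obtain ⟨c, hcz⟩ := torsion_smul hp he hya.2 hya.1 hz
        have hzW : z ∈ Ws := hcz ▸ hcy c
        obtain ⟨B, hB, hsum⟩ := Finset.mem_image.mp hzW
        exact Or.inl ⟨B, (Finset.mem_powerset.mp hB).trans (Finset.subset_insert _ _), hsum⟩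
      · right
        obtain ⟨s, hsmem, hsout⟩ := Finset.not_subset.mp hsub
        have hsup : insert s Ws ⊆ Ws ∪ Ws.image (fun t => y a + t) := by
          intro t ht
          rcases Finset.mem_insert.mp ht with rfl | ht1
          · exact Finset.mem_union_right _ hsmem
          · exact Finset.mem_union_left _ ht1
        have h1 : Ws.card + 1 ≤ (Ws ∪ Ws.image (fun t => y a + t)).card := by
          have := Finset.card_le_card hsup
          rwa [Finset.card_insert_of_notMem hsout] at this
        rw [hsums, Finset.card_insert_of_notMem ha]
        omega
  -- apply to a subset of size p - 1
  obtain ⟨V', hV'sub, hV'card⟩ := Finset.exists_subset_card_eq (s := V) (n := p-1) hcard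
  have hyV' : ∀ v ∈ V', y v ≠ 0 ∧ p • y v = 0 := fun v hv => hy v (hV'sub hv)
  rcases main V' hyV' with ⟨B, hB, hsum⟩ | hc
  · exact ⟨B, hB.trans hV'sub, (Finset.card_le_card hB).trans_eq hV'card, hsum⟩
  · set Tor : Finset (ZMod (p^e)) :=
      (Finset.range p).image (fun c : ℕ => (c : ZMod (p^e)) * (p : ZMod (p^e))^(e-1)) with hTor
    have hTorCard : Tor.card ≤ p := le_trans Finset.card_image_le (by simp)
    have hTorMem : ∀ x : ZMod (p^e), p • x = 0 → x ∈ Tor := by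
      intro x hx
      obtain ⟨c, hcp, hcx⟩ := ptorsion_mem hp he hx
      exact Finset.mem_image.mpr ⟨c, Finset.mem_range.mpr hcp, hcx.symm⟩
    have hsubTor : V'.powerset.image (fun B => ∑ v ∈ B, y v) ⊆ Tor := by
      intro s hs
      obtain ⟨B, hB, hsum⟩ := Finset.mem_image.mp hs
      apply hTorMem
      rw [← hsum, Finset.smul_sum]
      exact Finset.sum_eq_zero fun v hv =>
        (hyV' v ((Finset.mem_powerset.mp hB) hv)).2
    have : (V'.powerset.image (fun B => ∑ v ∈ B, y v)) = Tor := by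
      apply Finset.eq_of_subset_of_card_le hsubTor
      rw [hV'card] at hc
      have := hp.pos
      omega
    have hzT : z ∈ V'.powerset.image (fun B => ∑ v ∈ B, y v) := this ▸ hTorMem z hz
    obtain ⟨B, hB, hsum⟩ := Finset.mem_image.mp hzT
    exact ⟨B, (Finset.mem_powerset.mp hB).trans hV'sub,
      (Finset.card_le_card (Finset.mem_powerset.mp hB)).trans_eq hV'card, hsum⟩

end Olson

set_option maxHeartbeats 2000000 in
theorem stmt6 (r : ℕ) (p k : Fin r → ℕ) (α : Fin r → ℕ → ℕ)
    (hp : ∀ i, (p i).Prime) (hinj : Function.Injective p)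
    (hk : ∀ i, 1 ≤ k i)
    (hα1 : ∀ i j, j < k i → 1 ≤ α i j)
    (hmono : ∀ i, ∀ j j' : ℕ, j ≤ j' → j' < k i → α i j' ≤ α i j)
    (hzero : ∀ i j, k i ≤ j → α i j = 0)
    (i₀ : Fin r) (hgt : α i₀ 1 < α i₀ 0)
    (l : ℕ) (hl : 0 < l) (hdvd : p i₀ ^ (α i₀ 1 + 1) ∣ l)
    (S : Finset (((i : Fin r) → (j : Fin (k i)) → ZMod (p i ^ α i j.val)) × ℕ))
    (hS : DenseUFIS S) :
    (S.filter (fun x => addOrderOf x.1 = l)).card ≤ p i₀ := by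
  classical
  by_contra hcon
  push_neg at hcon
  obtain ⟨hUFIS, hcross, hmin⟩ := hS
  set W : Finset ((((i : Fin r) → (j : Fin (k i)) → ZMod (p i ^ α i j.val))) × ℕ) :=
    S.filter (fun x => addOrderOf x.1 = l) with hWdef
  have hWcard : p i₀ + 1 ≤ W.card := hcon
  have hp0p : (p i₀).Prime := hp i₀
  have hp2 : 2 ≤ p i₀ := hp0p.two_le
  set a := l.factorization (p i₀) with ha
  have hpa : p i₀ ^ a ∣ l := Nat.ordProj_dvd l (p i₀)
  have hage : α i₀ 1 + 1 ≤ a :=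
    (Nat.Prime.pow_dvd_iff_le_factorization hp0p hl.ne').mp hdvd
  have ha1 : 1 ≤ a := by omega
  have hpl : p i₀ ∣ l := dvd_trans (dvd_pow_self (p i₀) (by omega : a ≠ 0)) hpa
  have hlp_pos : 0 < l / p i₀ := Nat.div_pos (Nat.le_of_dvd hl hpl) hp0p.pos
  have hl_eq : l = p i₀ * (l / p i₀) := (Nat.mul_div_cancel' hpl).symm
  have hlplt : l / p i₀ < l := Nat.div_lt_self hl hp0p.one_lt
  set j0 : Fin (k i₀) := ⟨0, hk i₀⟩ with hj0
  have hα₁ : 1 ≤ α i₀ j0.val := hα1 i₀ 0 (hk i₀)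
  have hpow_dvd : p i₀ ^ (a - 1) ∣ l / p i₀ := by
    rw [Nat.dvd_div_iff_mul_dvd hpl, ← pow_succ']
    have : a - 1 + 1 = a := by omega
    rw [this]
    exact hpa
  -- KEY coordinate lemma
  have key : ∀ g : ((i : Fin r) → (j : Fin (k i)) → ZMod (p i ^ α i j.val)), l • g = 0 → (p i₀)^(a-1) • (g i₀ j0) = 0 → (l / p i₀) • g = 0 := by
    intro g hg h0
    funext i j
    have hcoord : l • (g i j) = 0 := by
      have := congrFun (congrFun hg i) j
      simpa using this
    have hord1 : addOrderOf (g i j) ∣ l := addOrderOf_dvd_of_nsmul_eq_zero hcoord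
    have hord2 : addOrderOf (g i j) ∣ p i ^ α i j.val := by
      apply addOrderOf_dvd_of_nsmul_eq_zero
      rw [nsmul_eq_mul, ZMod.natCast_self, zero_mul]
    have hgoal : ((l / p i₀) • g) i j = (l / p i₀) • (g i j) := rfl
    rw [hgoal]
    suffices hdvd2 : addOrderOf (g i j) ∣ l / p i₀ by
      exact addOrderOf_dvd_iff_nsmul_eq_zero.mp hdvd2
    by_cases hi : i = i₀
    · have hi' := hi.symm
      subst hi'
      by_cases hj : j = j0
      · subst hj
        exact (addOrderOf_dvd_of_nsmul_eq_zero h0).trans hpow_dvd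
      · have hjv : 1 ≤ j.val := by
          rcases Nat.eq_zero_or_pos j.val with h1 | h1
          · exact absurd (Fin.ext h1) hj
          · exact h1
        have hmono' : α i₀ j.val ≤ α i₀ 1 := hmono i₀ 1 j.val hjv j.2
        refine hord2.trans ((pow_dvd_pow _ ?_).trans hpow_dvd)
        omega
    · have hord3 : addOrderOf (g i j) ∣ Nat.gcd l (p i ^ α i j.val) :=
        Nat.dvd_gcd hord1 hord2
      have hcop : Nat.Coprime (Nat.gcd l (p i ^ α i j.val)) (p i₀) := by
        apply Nat.Coprime.symm
        rw [Nat.Prime.coprime_iff_not_dvd hp0p]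
        intro hdvd'
        have h1 : p i₀ ∣ p i ^ α i j.val := hdvd'.trans (Nat.gcd_dvd_right _ _)
        have h2 : p i₀ ∣ p i := hp0p.dvd_of_dvd_pow h1
        have h3 : p i₀ = p i := (Nat.prime_dvd_prime_iff_eq hp0p (hp i)).mp h2
        exact hi (hinj h3.symm)
      have h4 : Nat.gcd l (p i ^ α i j.val) ∣ p i₀ * (l / p i₀) :=
        hl_eq ▸ Nat.gcd_dvd_left _ _
      exact hord3.trans (Nat.Coprime.dvd_of_dvd_mul_left hcop h4)
  -- facts about W
  have hWsub : W ⊆ S := Finset.filter_subset _ _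
  have hWord : ∀ x ∈ W, addOrderOf x.1 = l := fun x hx => (Finset.mem_filter.mp hx).2
  have hWl : ∀ x ∈ W, l • x.1 = 0 := fun x hx => by
    rw [← hWord x hx]; exact addOrderOf_nsmul_eq_zero _
  set y : ((((i : Fin r) → (j : Fin (k i)) → ZMod (p i ^ α i j.val))) × ℕ) →
      ZMod (p i₀ ^ α i₀ j0.val) := fun x => (p i₀)^(a-1) • (x.1 i₀ j0) with hy
  have hyt : ∀ x ∈ W, y x ≠ 0 ∧ p i₀ • y x = 0 := by
    intro x hx
    constructor
    · intro h0
      have h1 := key x.1 (hWl x hx) h0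
      have hord := addOrderOf_dvd_of_nsmul_eq_zero h1
      rw [hWord x hx] at hord
      exact absurd (Nat.le_of_dvd hlp_pos hord) (not_le.mpr hlplt)
    · rw [hy]
      simp only
      rw [smul_smul, ← pow_succ']
      have hsa : a - 1 + 1 = a := by omega
      rw [hsa]
      have hord1 : addOrderOf (x.1 i₀ j0) ∣ l := by
        apply addOrderOf_dvd_of_nsmul_eq_zero
        have := congrFun (congrFun (hWl x hx) i₀) j0
        simpa using this
      have hord2 : addOrderOf (x.1 i₀ j0) ∣ p i₀ ^ α i₀ j0.val := by
        apply addOrderOf_dvd_of_nsmul_eq_zero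
        rw [nsmul_eq_mul, ZMod.natCast_self, zero_mul]
      obtain ⟨c, hc, hgcd⟩ := (Nat.dvd_prime_pow hp0p).mp (Nat.gcd_dvd_right l (p i₀ ^ α i₀ j0.val))
      have hca : c ≤ a := by
        apply (Nat.Prime.pow_dvd_iff_le_factorization hp0p hl.ne').mp
        exact hgcd ▸ Nat.gcd_dvd_left l _
      apply addOrderOf_dvd_iff_nsmul_eq_zero.mp
      exact (Nat.dvd_gcd hord1 hord2).trans (hgcd ▸ pow_dvd_pow (p i₀) hca)
  -- unique factorization of S
  obtain ⟨hind, hSz, hfactU⟩ := hUFIS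
  obtain ⟨F, hF, hu⟩ := hfactU
  have huniq : ∀ F', IsFactorization S F' → F' = F := fun F' h' => hu F' h'
  have hUFIS' : IsUFIS S := ⟨hind, hSz, F, hF, hu⟩
  -- construction of candidate subsets
  have mk : ∀ w ∈ W, ∀ V ⊆ W.erase w, p i₀ - 1 ≤ V.card →
      ∃ T ⊆ insert w V, w ∈ T ∧ 2 ≤ T.card ∧ T.card ≤ p i₀ ∧
        (p i₀)^(a-1) • (seqSum T i₀ j0) = 0 := by
    intro w hw V hV hVcard
    have hyV : ∀ v ∈ V, y v ≠ 0 ∧ p i₀ • y v = 0 := fun v hv =>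
      hyt v (Finset.mem_of_mem_erase (hV hv))
    have hzt : p i₀ • (-(y w)) = 0 := by rw [smul_neg, (hyt w hw).2, neg_zero]
    obtain ⟨B, hB, hBcard, hBsum⟩ := olson hp0p hα₁ y V hyV (-(y w)) hzt hVcard
    have hwB : w ∉ B := fun hwB => (Finset.notMem_erase w W) (hV (hB hwB))
    have hBne : B.Nonempty := by
      rw [Finset.nonempty_iff_ne_empty]
      intro hBe
      rw [hBe, Finset.sum_empty] at hBsum
      exact (hyt w hw).1 (neg_eq_zero.mp hBsum.symm)
    refine ⟨insert w B, Finset.insert_subset_insert _ hB, Finset.mem_insert_self _ _, ?_, ?_, ?_⟩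
    · rw [Finset.card_insert_of_notMem hwB]
      have := Finset.card_pos.mpr hBne
      omega
    · rw [Finset.card_insert_of_notMem hwB]
      omega
    · have hsum : seqSum (insert w B) i₀ j0 = ∑ x ∈ insert w B, x.1 i₀ j0 := by
        unfold seqSum
        rw [Finset.sum_apply, Finset.sum_apply]
      rw [hsum, Finset.smul_sum, Finset.sum_insert hwB]
      have : ∀ x ∈ B, (p i₀)^(a-1) • x.1 i₀ j0 = y x := fun x hx => rfl
      rw [Finset.sum_congr rfl this, hBsum]
      show y w + -(y w) = 0
      rw [add_neg_cancel]
  -- find good T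
  have goodT : ∃ T ⊆ W, 2 ≤ T.card ∧ T.card ≤ p i₀ ∧
      (p i₀)^(a-1) • (seqSum T i₀ j0) = 0 ∧ seqSum T ≠ 0 := by
    obtain ⟨w₁, hw₁⟩ := Finset.card_pos.mp (by omega : 0 < W.card)
    have hV₁ : p i₀ - 1 ≤ (W.erase w₁).card := by
      rw [Finset.card_erase_of_mem hw₁]; omega
    obtain ⟨T₁, hT₁sub, hwT₁, hT₁2, hT₁p, hT₁tor⟩ :=
      mk w₁ hw₁ (W.erase w₁) Finset.Subset.rfl hV₁
    have hT₁W : T₁ ⊆ W := by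
      rw [Finset.insert_erase hw₁] at hT₁sub
      exact hT₁sub
    by_cases hz₁ : seqSum T₁ = 0
    · obtain ⟨A, hA, hw₁A⟩ := (hF.2.2 w₁).mp (hWsub hw₁)
      have hAT₁ : A ⊆ T₁ := saturation hSz hF huniq (hT₁W.trans hWsub) hz₁ hA
        ⟨w₁, Finset.mem_inter.mpr ⟨hw₁A, hwT₁⟩⟩
      have hex : ∃ u ∈ A, u ≠ w₁ := by
        by_contra hno
        push_neg at hno
        have hAsub : A = {w₁} := by
          apply Finset.Subset.antisymm
          · intro x hx
            rw [Finset.mem_singleton]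
            exact hno x hx
          · intro x hx
            rw [Finset.mem_singleton] at hx
            exact hx ▸ hw₁A
        have := (hF.1 A hA).2.1
        rw [hAsub] at this
        unfold seqSum at this
        rw [Finset.sum_singleton] at this
        exact hind w₁ (hWsub hw₁) this
      obtain ⟨u, huA, huw⟩ := hex
      have hV₂ : p i₀ - 1 ≤ ((W.erase w₁).erase u).card := by
        have h1 := Finset.card_erase_of_mem hw₁
        have h2 : ((W.erase w₁).erase u).card ≥ (W.erase w₁).card - 1 := by
          by_cases hmem : u ∈ W.erase w₁
          · rw [Finset.card_erase_of_mem hmem]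
          · rw [Finset.erase_eq_of_notMem hmem]; omega
        omega
      obtain ⟨T₂, hT₂sub, hwT₂, hT₂2, hT₂p, hT₂tor⟩ :=
        mk w₁ hw₁ ((W.erase w₁).erase u) (Finset.erase_subset _ _) hV₂
      have hT₂W : T₂ ⊆ W := hT₂sub.trans (by
        intro x hx
        rcases Finset.mem_insert.mp hx with rfl | hx1
        · exact hw₁
        · exact Finset.mem_of_mem_erase (Finset.mem_of_mem_erase hx1))
      refine ⟨T₂, hT₂W, hT₂2, hT₂p, hT₂tor, ?_⟩
      intro hz₂
      have hAT₂ : A ⊆ T₂ := saturation hSz hF huniq (hT₂W.trans hWsub) hz₂ hA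
        ⟨w₁, Finset.mem_inter.mpr ⟨hw₁A, hwT₂⟩⟩
      have huT₂ : u ∈ T₂ := hAT₂ huA
      rcases Finset.mem_insert.mp (hT₂sub huT₂) with h1 | h1
      · exact huw h1
      · exact Finset.notMem_erase u _ h1
    · exact ⟨T₁, hT₁W, hT₁2, hT₁p, hT₁tor, hz₁⟩
  obtain ⟨T, hTW, hT2, hTp, hTtor, hTz⟩ := goodT
  have hTS : T ⊆ S := hTW.trans hWsub
  have hTl : l • seqSum T = 0 := by
    unfold seqSum
    rw [Finset.smul_sum]
    exact Finset.sum_eq_zero fun x hx => hWl x (hTW hx)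
  have hlph : (l / p i₀) • seqSum T = 0 := key (seqSum T) hTl hTtor
  have hordh : addOrderOf (seqSum T) ∣ l / p i₀ := addOrderOf_dvd_of_nsmul_eq_zero hlph
  have hordh_pos : 0 < addOrderOf (seqSum T) := by
    rcases Nat.eq_zero_or_pos (addOrderOf (seqSum T)) with h0 | h1
    · rw [h0] at hordh
      exact absurd (Nat.eq_zero_of_zero_dvd hordh) hlp_pos.ne'
    · exact h1
  have hordh_le : addOrderOf (seqSum T) ≤ l / p i₀ := Nat.le_of_dvd hlp_pos hordh
  set n₀ : ℕ := (S.sup fun x => x.2) + 1 with hn₀def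
  have hn₀ : (seqSum T, n₀) ∉ S := by
    intro hmem
    have h9 := Finset.le_sup (f := fun x : (_ × ℕ) => x.2) hmem
    simp only at h9
    omega
  have hS'U : IsUFIS (insert (seqSum T, n₀) (S \ T)) :=
    amalgamate hUFIS' hTS (Finset.card_pos.mp (by omega)) rfl hTz hn₀
  set S' := insert (seqSum T, n₀) (S \ T) with hS'def
  have heS' : (seqSum T, n₀) ∉ S \ T := fun hmem => hn₀ (Finset.mem_sdiff.mp hmem).1
  -- crossNum computation
  have hcT : ∑ x ∈ T, (1:ℝ) / (addOrderOf x.1 : ℝ) = T.card * (1 / (l:ℝ)) := by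
    rw [Finset.sum_congr rfl (fun x hx => by rw [hWord x (hTW hx)]), Finset.sum_const,
      nsmul_eq_mul]
  have hcS' : crossNum S' = crossNum S - T.card * (1 / (l:ℝ))
      + 1 / (addOrderOf (seqSum T) : ℝ) := by
    unfold crossNum
    rw [hS'def, Finset.sum_insert heS', Finset.sum_sdiff_eq_sub hTS, hcT]
    show 1 / ((addOrderOf (seqSum T)):ℝ) + _ = _
    ring
  -- real inequalities
  have hlR : (0:ℝ) < (l:ℝ) := by exact_mod_cast hl
  have hordR : (0:ℝ) < (addOrderOf (seqSum T) : ℝ) := by exact_mod_cast hordh_pos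
  have hb2 : (p i₀ : ℝ) * (1/(l:ℝ)) ≤ 1 / (addOrderOf (seqSum T) : ℝ) := by
    have h1 : (addOrderOf (seqSum T) : ℝ) ≤ ((l / p i₀ : ℕ) : ℝ) := by exact_mod_cast hordh_le
    have h2 : ((l / p i₀ : ℕ) : ℝ) = (l:ℝ) / (p i₀ : ℝ) := by
      rw [Nat.cast_div hpl]
      exact_mod_cast hp0p.pos.ne'
    have h3 : (0:ℝ) < (p i₀ : ℝ) := by exact_mod_cast hp0p.pos
    have h4 : (0:ℝ) < (l:ℝ) / (p i₀ : ℝ) := by positivity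
    have h5 : 1 / ((l:ℝ) / (p i₀ : ℝ)) ≤ 1 / (addOrderOf (seqSum T) : ℝ) :=
      one_div_le_one_div_of_le hordR (h2 ▸ h1)
    calc (p i₀ : ℝ) * (1/(l:ℝ)) = 1 / ((l:ℝ) / (p i₀ : ℝ)) := by
          field_simp
      _ ≤ 1 / (addOrderOf (seqSum T) : ℝ) := h5
  have hb1 : (T.card : ℝ) * (1/(l:ℝ)) ≤ (p i₀ : ℝ) * (1/(l:ℝ)) := by
    have : (T.card : ℝ) ≤ (p i₀ : ℝ) := by exact_mod_cast hTp
    apply mul_le_mul_of_nonneg_right this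
    positivity
  have hge : crossNum S ≤ crossNum S' := by
    rw [hcS']
    linarith
  by_cases hbdd : BddAbove {x : ℝ |
      ∃ Q : Finset ((((i : Fin r) → (j : Fin (k i)) → ZMod (p i ^ α i j.val))) × ℕ),
        IsUFIS Q ∧ crossNum Q = x}
  · have hle : crossNum S' ≤ K1 (((i : Fin r) → (j : Fin (k i)) → ZMod (p i ^ α i j.val))) := by
      apply le_csSup hbdd
      exact ⟨S', hS'U, rfl⟩
    have heq : crossNum S' = K1 (((i : Fin r) → (j : Fin (k i)) → ZMod (p i ^ α i j.val))) :=
      le_antisymm hle (hcross ▸ hge)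
    have hcard := hmin S' hS'U heq
    have hc1 : S'.card = (S \ T).card + 1 := Finset.card_insert_of_notMem heS'
    have hc2 : (S \ T).card = S.card - T.card := Finset.card_sdiff_of_subset hTS
    have hc3 : T.card ≤ S.card := Finset.card_le_card hTS
    omega
  · have hK0 : K1 (((i : Fin r) → (j : Fin (k i)) → ZMod (p i ^ α i j.val))) = 0 := by
      unfold K1
      exact Real.sSup_of_not_bddAbove hbdd
    rw [hK0] at hcross
    have hWpos : (0:ℝ) < ∑ x ∈ W, (1:ℝ) / (addOrderOf x.1 : ℝ) := by
      apply Finset.sum_pos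
      · intro x hx
        rw [hWord x hx]
        positivity
      · exact Finset.card_pos.mp (by omega)
    have hWle : ∑ x ∈ W, (1:ℝ) / (addOrderOf x.1 : ℝ) ≤ crossNum S := by
      unfold crossNum
      apply Finset.sum_le_sum_of_subset_of_nonneg hWsub
      intro x _ _
      positivity
    rw [hcross] at hWle
    linarith
end

section
/- Let G be a nontrivial finite abelian group with exponent exp(G), and let P⁻(exp(G)) denote the smallest prime divisor of exp(G). Then k(G) + 1/exp(G) ≤ K(G) ≤ k(G) + 1/P⁻(exp(G)). -/
open Finset

attribute [local instance] Classical.propDecidable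

section Aux
variable {G : Type*} [AddCommGroup G] [Fintype G]

lemma two_le_ord {g : G} (hg : g ≠ 0) : 2 ≤ addOrderOf g := by
  have h1 : addOrderOf g ≠ 1 := fun h => hg (AddMonoid.addOrderOf_eq_one_iff.mp h)
  have h0 : 0 < addOrderOf g := addOrderOf_pos g
  omega

lemma card_succ_le_of_zsf (S : Finset (G × ℕ)) (h : ZeroSumFree S) :
    S.card + 1 ≤ (S.powerset.image seqSum).card := by
  induction S using Finset.induction_on with
  | empty => simp
  | @insert x s hx ih =>
    have hzs : ZeroSumFree s := fun T hT => h T (hT.trans (subset_insert x s))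
    have hsub : insert (seqSum s + x.1) (s.powerset.image seqSum) ⊆
        ((insert x s).powerset.image seqSum) := by
      intro y hy
      rcases Finset.mem_insert.mp hy with rfl | hy
      · refine Finset.mem_image.mpr ⟨insert x s, by simp, ?_⟩
        simp [seqSum, Finset.sum_insert hx, add_comm]
      · rcases Finset.mem_image.mp hy with ⟨T, hT, rfl⟩
        exact Finset.mem_image.mpr ⟨T, Finset.mem_powerset.mpr
          ((Finset.mem_powerset.mp hT).trans (subset_insert x s)), rfl⟩
    have hnew : seqSum s + x.1 ∉ s.powerset.image seqSum := by
      intro hmem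
      rcases Finset.mem_image.mp hmem with ⟨T, hT, hTs⟩
      have hTs' : T ⊆ s := Finset.mem_powerset.mp hT
      have hU : seqSum (insert x (s \ T)) = 0 := by
        have hx' : x ∉ s \ T := fun hc => hx (Finset.mem_sdiff.mp hc).1
        have hsd : ∑ y ∈ s \ T, y.1 + ∑ y ∈ T, y.1 = ∑ y ∈ s, y.1 :=
          Finset.sum_sdiff hTs'
        have : seqSum (s \ T) = seqSum s - seqSum T := by
          simp only [seqSum, eq_sub_iff_add_eq]; exact hsd
        rw [seqSum, Finset.sum_insert hx', ← seqSum, this, hTs]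
        abel
      refine h (insert x (s \ T)) ?_ (insert_nonempty _ _) hU
      intro y hy
      rcases Finset.mem_insert.mp hy with rfl | hy
      · exact mem_insert_self _ _
      · exact mem_insert_of_mem (Finset.mem_sdiff.mp hy).1
    calc (insert x s).card + 1 ≤ s.card + 1 + 1 := by
          simp [Finset.card_insert_le]
      _ ≤ (s.powerset.image seqSum).card + 1 := by linarith [ih hzs]
      _ = (insert (seqSum s + x.1) (s.powerset.image seqSum)).card := by
          rw [Finset.card_insert_of_notMem hnew]
      _ ≤ _ := Finset.card_le_card hsub

lemma card_le_of_zsf (S : Finset (G × ℕ)) (h : ZeroSumFree S) :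
    S.card + 1 ≤ Fintype.card G :=
  (card_succ_le_of_zsf S h).trans ((S.powerset.image seqSum).card_le_univ)

lemma crossNum_le (S : Finset (G × ℕ)) (h : IsIndexedSeq S) :
    crossNum S ≤ S.card / 2 := by
  have : crossNum S ≤ ∑ _x ∈ S, (1:ℝ)/2 := by
    refine Finset.sum_le_sum fun x hx => ?_
    have h2 : (2:ℝ) ≤ (addOrderOf x.1 : ℝ) := by exact_mod_cast two_le_ord (h x hx)
    exact one_div_le_one_div_of_le two_pos h2
  simpa [div_eq_mul_inv, mul_comm] using this

lemma crossNum_nonneg (S : Finset (G × ℕ)) : 0 ≤ crossNum S :=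
  Finset.sum_nonneg fun x _ => by positivity

lemma littleK_bdd : BddAbove {x : ℝ | ∃ S : Finset (G × ℕ),
    IsIndexedSeq S ∧ ZeroSumFree S ∧ crossNum S = x} := by
  refine ⟨(Fintype.card G : ℝ) / 2, ?_⟩
  rintro x ⟨S, hI, hZ, rfl⟩
  refine (crossNum_le S hI).trans ?_
  have := card_le_of_zsf S hZ
  have : (S.card : ℝ) ≤ Fintype.card G := by exact_mod_cast Nat.le_of_succ_le this
  linarith

lemma erase_zsf (S : Finset (G × ℕ)) (h : IsIrreducibleSeq S) (a : G × ℕ)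
    (ha : a ∈ S) : ZeroSumFree (S.erase a) := by
  intro T hT hTne hzero
  have hTS : T ⊆ S := hT.trans (erase_subset a S)
  have hne : T ≠ S := by
    intro hEq
    exact notMem_erase a S (hT (hEq ▸ ha))
  exact h.2.2 T hTS hTne hne hzero

lemma bigK_bdd : BddAbove {x : ℝ | ∃ S : Finset (G × ℕ),
    IsIndexedSeq S ∧ IsIrreducibleSeq S ∧ crossNum S = x} := by
  refine ⟨(Fintype.card G : ℝ) / 2 + 1 / 2, ?_⟩
  rintro x ⟨S, hI, hirr, rfl⟩
  obtain ⟨a, ha⟩ := hirr.1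
  have hZ : ZeroSumFree (S.erase a) := erase_zsf S hirr a ha
  have hc : ((S.erase a).card : ℝ) + 1 ≤ Fintype.card G := by
    exact_mod_cast card_le_of_zsf _ hZ
  have hcard : (S.card : ℝ) ≤ ((S.erase a).card : ℝ) + 1 := by
    have := Finset.card_erase_add_one ha
    exact_mod_cast this.ge
  have := crossNum_le S hI
  have h2 : (S.card : ℝ) / 2 ≤ (Fintype.card G : ℝ) / 2 + 1/2 := by
    nlinarith
  linarith

end Aux

section Main
variable {G : Type*} [AddCommGroup G] [Fintype G]

lemma unit_irreducible (h : G) (hh : h ≠ 0) :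
    ∃ S : Finset (G × ℕ), IsIndexedSeq S ∧ IsIrreducibleSeq S ∧ crossNum S = 1 := by
  set n := addOrderOf h with hn
  have hnpos : 0 < n := addOrderOf_pos h
  have hinj : Function.Injective (fun i : ℕ => ((h, i) : G × ℕ)) := by
    intro a b hab; simpa using congrArg Prod.snd hab
  refine ⟨(Finset.range n).image (fun i => (h, i)), ?_, ⟨?_, ?_, ?_⟩, ?_⟩
  · intro x hx
    rcases Finset.mem_image.mp hx with ⟨i, _, rfl⟩
    exact hh
  · exact (Finset.nonempty_range_iff.mpr hnpos.ne').image _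
  · rw [seqSum, Finset.sum_image (fun a _ b _ hab => hinj hab)]
    simp [hn, addOrderOf_nsmul_eq_zero]
  · intro T hT hTne hTS hzero
    have hfst : ∀ x ∈ T, x.1 = h := by
      intro x hx
      rcases Finset.mem_image.mp (hT hx) with ⟨i, _, rfl⟩; rfl
    have hsum : seqSum T = T.card • h := by
      rw [seqSum, Finset.sum_congr rfl hfst, Finset.sum_const]
    have hcardlt : T.card < n := by
      have hle : T.card ≤ n := by
        have := Finset.card_le_card hT
        rwa [Finset.card_image_of_injective _ hinj, Finset.card_range] at this
      rcases lt_or_eq_of_le hle with h' | h'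
      · exact h'
      · exact absurd (Finset.eq_of_subset_of_card_le hT (by
          rw [Finset.card_image_of_injective _ hinj, Finset.card_range, h'])) hTS
    have hdvd : n ∣ T.card := addOrderOf_dvd_of_nsmul_eq_zero (hsum ▸ hzero)
    have hpos : 0 < T.card := Finset.card_pos.mpr hTne
    exact absurd (Nat.le_of_dvd hpos hdvd) (by omega)
  · rw [crossNum, Finset.sum_image (fun a _ b _ hab => hinj hab)]
    simp only [Finset.sum_const, Finset.card_range, nsmul_eq_mul]
    rw [← hn]
    have : (n:ℝ) ≠ 0 := by positivity
    field_simp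

theorem stmt13' (G : Type*) [AddCommGroup G] [Fintype G] [Nontrivial G] :
    littleK G + 1 / (AddMonoid.exponent G : ℝ) ≤ bigK G ∧
      bigK G ≤ littleK G + 1 / ((AddMonoid.exponent G).minFac : ℝ) := by
  classical
  set m := AddMonoid.exponent G with hm
  have hmpos : 0 < m := AddMonoid.exponent_pos.mpr .of_finite
  obtain ⟨h, hh⟩ := exists_ne (0 : G)
  obtain ⟨S1, hS1I, hS1irr, hS1cn⟩ := unit_irreducible h hh
  have hone : (1:ℝ) ∈ {x : ℝ | ∃ S : Finset (G × ℕ),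
      IsIndexedSeq S ∧ IsIrreducibleSeq S ∧ crossNum S = x} := ⟨S1, hS1I, hS1irr, hS1cn⟩
  have bigne : {x : ℝ | ∃ S : Finset (G × ℕ),
      IsIndexedSeq S ∧ IsIrreducibleSeq S ∧ crossNum S = x}.Nonempty := ⟨1, hone⟩
  have littlene : {x : ℝ | ∃ S : Finset (G × ℕ),
      IsIndexedSeq S ∧ ZeroSumFree S ∧ crossNum S = x}.Nonempty := by
    refine ⟨0, ∅, ?_, ?_, by simp [crossNum]⟩
    · intro x hx; simp at hx
    · intro T hT hTne
      rw [Finset.subset_empty] at hT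
      exact absurd (hT ▸ hTne) (by simp)
  constructor
  · -- lower bound
    have hm1 : (1:ℝ) ≤ (m:ℝ) := by exact_mod_cast hmpos
    have key : ∀ x ∈ {x : ℝ | ∃ S : Finset (G × ℕ),
        IsIndexedSeq S ∧ ZeroSumFree S ∧ crossNum S = x}, x ≤ bigK G - 1/(m:ℝ) := by
      rintro x ⟨S, hI, hZ, rfl⟩
      by_cases hne : S.Nonempty
      · set g : G := -seqSum S with hg
        have hgne : g ≠ 0 := by
          intro h0
          exact hZ S subset_rfl hne (by rw [← neg_eq_zero, ← hg, h0])
        set n : ℕ := (S.sup (fun x => x.2)) + 1 with hn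
        have hnot : (g, n) ∉ S := by
          intro hmem
          have := Finset.le_sup (f := fun x : G × ℕ => x.2) hmem
          simp only at this
          omega
        set S' : Finset (G × ℕ) := insert (g, n) S with hS'
        have hI' : IsIndexedSeq S' := by
          intro y hy
          rcases Finset.mem_insert.mp hy with rfl | hy
          · exact hgne
          · exact hI y hy
        have hsum' : seqSum S' = 0 := by
          rw [hS', seqSum, Finset.sum_insert hnot, ← seqSum, hg]
          exact neg_add_cancel _
        have hirr' : IsIrreducibleSeq S' := by
          refine ⟨Finset.insert_nonempty _ _, hsum', ?_⟩
          intro T hT hTne hTS' hzero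
          by_cases hgT : (g, n) ∈ T
          · set T' := T.erase (g, n) with hT'
            have hT'S : T' ⊆ S := by
              intro y hy
              have hy1 := Finset.mem_of_mem_erase hy
              have hy2 := Finset.ne_of_mem_erase hy
              rcases Finset.mem_insert.mp (hT hy1) with h' | h'
              · exact absurd h' hy2
              · exact h'
            have hsumT : seqSum T = g + seqSum T' := by
              rw [seqSum, ← Finset.add_sum_erase _ _ hgT]; rfl
            have hTsum : seqSum T' = seqSum S := by
              have : g + seqSum T' = 0 := hsumT ▸ hzero
              rw [hg, neg_add_eq_zero] at this
              exact this.symm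
            have hUne : (S \ T').Nonempty := by
              rw [Finset.sdiff_nonempty]
              intro hsub
              have : T' = S := Finset.Subset.antisymm hT'S hsub
              exact hTS' (by rw [← Finset.insert_erase hgT, ← hT', this])
            have hUsum : seqSum (S \ T') = 0 := by
              have hsd : ∑ y ∈ S \ T', y.1 + ∑ y ∈ T', y.1 = ∑ y ∈ S, y.1 :=
                Finset.sum_sdiff hT'S
              have : seqSum (S \ T') + seqSum T' = seqSum S := hsd
              rw [hTsum] at this
              simpa using this
            exact hZ (S \ T') Finset.sdiff_subset hUne hUsum
          · have hTS : T ⊆ S := by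
              intro y hy
              rcases Finset.mem_insert.mp (hT hy) with rfl | h'
              · exact absurd hy hgT
              · exact h'
            exact hZ T hTS hTne hzero
        have hcn' : crossNum S' = 1/(addOrderOf g : ℝ) + crossNum S := by
          rw [hS', crossNum, Finset.sum_insert hnot]; rfl
        have hordle : addOrderOf g ≤ m :=
          Nat.le_of_dvd hmpos (AddMonoid.addOrder_dvd_exponent g)
        have hordpos : 0 < addOrderOf g := addOrderOf_pos g
        have hdivle : (1:ℝ)/(m:ℝ) ≤ 1/(addOrderOf g : ℝ) := by
          apply one_div_le_one_div_of_le
          · exact_mod_cast hordpos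
          · exact_mod_cast hordle
        have hbig : crossNum S' ≤ bigK G :=
          le_csSup bigK_bdd ⟨S', hI', hirr', rfl⟩
        linarith
      · rw [Finset.not_nonempty_iff_eq_empty] at hne
        subst hne
        have h0 : crossNum (∅ : Finset (G × ℕ)) = 0 := by simp [crossNum]
        have hbig1 : (1:ℝ) ≤ bigK G := le_csSup bigK_bdd hone
        have : 1/(m:ℝ) ≤ 1 := by
          rw [div_le_one (by linarith)]; exact hm1
        rw [h0]
        linarith
    have := csSup_le littlene key
    rw [littleK]
    linarith
  · -- upper bound
    refine csSup_le bigne ?_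
    rintro x ⟨S, hI, hirr, rfl⟩
    obtain ⟨a, ha⟩ := hirr.1
    have hZ : ZeroSumFree (S.erase a) := erase_zsf S hirr a ha
    have hsplit : crossNum S = (1 : ℝ)/(addOrderOf a.1 : ℝ) + crossNum (S.erase a) := by
      rw [crossNum, ← Finset.add_sum_erase _ _ ha]; rfl
    have hle1 : crossNum (S.erase a) ≤ littleK G :=
      le_csSup littleK_bdd ⟨S.erase a, fun x hx => hI x (Finset.erase_subset a S hx), hZ, rfl⟩
    have hord : (m.minFac : ℝ) ≤ (addOrderOf a.1 : ℝ) := by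
      have ha1 : a.1 ≠ 0 := hI a ha
      have h2 : 2 ≤ addOrderOf a.1 := two_le_ord ha1
      have hdvd : (addOrderOf a.1).minFac ∣ m :=
        ((addOrderOf a.1).minFac_dvd).trans (AddMonoid.addOrder_dvd_exponent a.1)
      have := Nat.minFac_le_of_dvd (Nat.minFac_prime (by omega)).two_le hdvd
      have := this.trans (Nat.minFac_le (by positivity : 0 < addOrderOf a.1))
      exact_mod_cast this
    have hrec : (1:ℝ)/(addOrderOf a.1 : ℝ) ≤ 1/(m.minFac : ℝ) := by
      apply one_div_le_one_div_of_le _ hord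
      exact_mod_cast Nat.minFac_pos m
    linarith

end Main


theorem stmt13 (G : Type*) [AddCommGroup G] [Fintype G] [Nontrivial G] :
    littleK G + 1 / (AddMonoid.exponent G : ℝ) ≤ bigK G ∧
      bigK G ≤ littleK G + 1 / ((AddMonoid.exponent G).minFac : ℝ) :=
  stmt13' G
end
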